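/- arXiv:math/9201242 — 5 statements merged into one kernel-verified Lean document; each statement's English description precedes it below -/
import Mathlib

section
/- There exist a stationary set S ⊆ {α < ω₃ : cf α = ω} and a stationary set A ⊆ {α < ω₃ : cf α = ω₁} such that for every γ ∈ A, S ∩ γ is not stationary in γ. (Assume there exist ω₂-many pairwise disjoint stationary subsets of {α < ω₃ : cf α = ω}.) -/
/-- `C` is a closed unbounded (club) subset of the ordinal `γ`:
it is a set of ordinals below `γ`, unbounded in `γ`, and closed
(contains each of its limit points below `γ`). -/
def IsClubIn (C : Set Ordinal) (γ : Ordinal) : Prop :=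
  C ⊆ Set.Iio γ ∧ (∀ β < γ, ∃ α ∈ C, β ≤ α) ∧
    ∀ α < γ, 0 < α → (∀ β < α, ∃ c ∈ C, β < c ∧ c < α) → α ∈ C

/-- `S` is stationary in the ordinal `γ`: it meets every club subset of `γ`. -/
def IsStatIn (S : Set Ordinal) (γ : Ordinal) : Prop :=
  ∀ C, IsClubIn C γ → (S ∩ C).Nonempty

/-- The order type of a set of ordinals. -/
noncomputable def otp (s : Set Ordinal) : Ordinal :=
  Ordinal.type ((· < ·) : s → s → Prop)

universe u

private lemma ordnum_21 : (3 : Ordinal.{u}) = Order.succ 2 := by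
  rw [← Ordinal.add_one_eq_succ]; exact_mod_cast (by norm_num : ((3:ℕ):Ordinal.{u}) = (2:ℕ) + 1)

private lemma aleph3_regular : (Cardinal.aleph (3 : Ordinal.{u})).IsRegular := by
  rw [ordnum_21]; exact Cardinal.isRegular_aleph_succ 2

private lemma aleph2_lt_aleph3 : Cardinal.aleph (2 : Ordinal.{u}) < Cardinal.aleph 3 :=
  Cardinal.aleph_lt_aleph.2 (by exact_mod_cast (by norm_num : (2:ℕ) < 3))

private lemma aleph1_lt_aleph3 : Cardinal.aleph (1 : Ordinal.{u}) < Cardinal.aleph 3 :=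
  Cardinal.aleph_lt_aleph.2 (by exact_mod_cast (by norm_num : (1:ℕ) < 3))

private lemma aleph1_lt_aleph2 : Cardinal.aleph (1 : Ordinal.{u}) < Cardinal.aleph 2 :=
  Cardinal.aleph_lt_aleph.2 (by exact_mod_cast (by norm_num : (1:ℕ) < 2))

private lemma aleph0_lt_aleph1 : Cardinal.aleph0.{u} < Cardinal.aleph 1 := by
  rw [← Cardinal.aleph_zero]
  exact Cardinal.aleph_lt_aleph.2 (by exact_mod_cast (by norm_num : (0:ℕ) < 1))

private lemma aleph0_lt_aleph3 : Cardinal.aleph0.{u} < Cardinal.aleph 3 := by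
  rw [← Cardinal.aleph_zero]
  exact Cardinal.aleph_lt_aleph.2 (by exact_mod_cast (by norm_num : (0:ℕ) < 3))

private lemma cof_omega3 : ((Cardinal.aleph (3 : Ordinal.{u})).ord).cof = Cardinal.aleph 3 :=
  aleph3_regular.cof_eq

private lemma omega3_isLimit : Order.IsSuccLimit ((Cardinal.aleph (3 : Ordinal.{u})).ord) :=
  Cardinal.isSuccLimit_ord (Cardinal.aleph0_le_aleph 3)

private lemma omega1_isLimit : Order.IsSuccLimit ((Cardinal.aleph (1 : Ordinal.{u})).ord) :=
  Cardinal.isSuccLimit_ord (Cardinal.aleph0_le_aleph 1)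

private lemma cof_omega1 : ((Cardinal.aleph (1 : Ordinal.{u})).ord).cof = Cardinal.aleph 1 := by
  have := Cardinal.isRegular_aleph_one.{u}.cof_eq
  simpa using this

private lemma omega_lim {γ : Ordinal.{u}} (hγ : Cardinal.aleph0 < γ.cof)
    (F : Ordinal.{u} → Ordinal.{u}) (hF : ∀ β < γ, β < F β ∧ F β < γ)
    {β : Ordinal.{u}} (hβ : β < γ) :
    ∃ α, β < α ∧ α < γ ∧ ∀ δ < α, ∃ β', β' < γ ∧ δ < β' ∧ F β' < α := by
  set g : ℕ → Ordinal.{u} := fun n => F^[n] β with hg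
  have hgγ : ∀ n, g n < γ := by
    intro n; induction n with
    | zero => exact hβ
    | succ n ih =>
      have : g (n+1) = F (g n) := Function.iterate_succ_apply' F n β
      rw [this]; exact (hF _ ih).2
  have hmono : ∀ n, g n < g (n+1) := by
    intro n
    have h1 : g (n+1) = F (g n) := Function.iterate_succ_apply' F n β
    rw [h1]; exact (hF _ (hgγ n)).1
  have hbdd : BddAbove (Set.range g) := Ordinal.bddAbove_range g
  have hle : ∀ n, g n ≤ ⨆ n, g n := fun n => le_ciSup hbdd n
  have hlt : ∀ n, g n < ⨆ n, g n := fun n => (hmono n).trans_le (hle (n+1))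
  have hαγ : (⨆ n, g n) < γ := by
    refine Ordinal.iSup_lt_ord_lift ?_ hgγ
    simpa using hγ
  refine ⟨⨆ n, g n, hlt 0, hαγ, ?_⟩
  intro δ hδ
  obtain ⟨n, hn⟩ := Ordinal.lt_iSup_iff.1 hδ
  refine ⟨g n, hgγ n, hn, ?_⟩
  have : F (g n) = g (n+1) := (Function.iterate_succ_apply' F n β).symm
  rw [this]; exact hlt (n+1)

private lemma succ_lt_omega3 {β : Ordinal.{u}} (h : β < (Cardinal.aleph 3).ord) :
    β + 1 < (Cardinal.aleph 3).ord := by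
  rw [Ordinal.add_one_eq_succ]; exact omega3_isLimit.succ_lt h

private lemma club_iInter {C : Ordinal.{u} → Set Ordinal.{u}}
    (hC : ∀ i < (Cardinal.aleph 2).ord, IsClubIn (C i) (Cardinal.aleph 3).ord) :
    IsClubIn (Set.Iio (Cardinal.aleph 3).ord ∩ {α | ∀ i < (Cardinal.aleph 2).ord, α ∈ C i})
      (Cardinal.aleph 3).ord := by
  set κ := (Cardinal.aleph (3 : Ordinal.{u})).ord with hκ
  have hcof0 : Cardinal.aleph0 < κ.cof := by rw [cof_omega3]; exact aleph0_lt_aleph3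
  -- next-element choice
  have hnxt : ∀ β (h : β + 1 < κ) i (hi : i < (Cardinal.aleph 2).ord),
      Classical.choose ((hC i hi).2.1 (β+1) h) ∈ C i ∧
      β + 1 ≤ Classical.choose ((hC i hi).2.1 (β+1) h) := by
    intro β h i hi
    obtain ⟨h1, h2⟩ := Classical.choose_spec ((hC i hi).2.1 (β+1) h)
    exact ⟨h1, h2⟩
  set F : Ordinal.{u} → Ordinal.{u} := fun β =>
    if h : β + 1 < κ then
      Ordinal.bsup (Cardinal.aleph 2).ord (fun i hi => Classical.choose ((hC i hi).2.1 (β+1) h))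
    else 0 with hF
  have h2pos : (0 : Ordinal.{u}) < (Cardinal.aleph 2).ord := by
    rw [Cardinal.lt_ord]
    simpa using (Cardinal.aleph_pos (2 : Ordinal.{u}))
  have hFspec : ∀ β < κ, β < F β ∧ F β < κ := by
    intro β hβ
    have h1 : β + 1 < κ := succ_lt_omega3 hβ
    rw [hF]; simp only [dif_pos h1]
    constructor
    · calc β < β + 1 := by
            rw [Ordinal.add_one_eq_succ]; exact Order.lt_succ β
        _ ≤ Classical.choose ((hC 0 h2pos).2.1 (β+1) h1) := (hnxt β h1 0 h2pos).2
        _ ≤ _ := Ordinal.le_bsup _ 0 h2pos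
    · refine Ordinal.bsup_lt_ord ?_ (fun i hi => (hC i hi).1 (hnxt β h1 i hi).1)
      rw [Cardinal.card_ord, cof_omega3]; exact aleph2_lt_aleph3
  refine ⟨Set.inter_subset_left, ?_, ?_⟩
  · -- unbounded
    intro β hβ
    obtain ⟨α, hβα, hαγ, hprop⟩ := omega_lim hcof0 F hFspec hβ
    refine ⟨α, ⟨hαγ, fun i hi => ?_⟩, hβα.le⟩
    refine (hC i hi).2.2 α hαγ (lt_of_le_of_lt (by simp) hβα) ?_
    intro δ hδ
    obtain ⟨β', hβ'κ, hδβ', hFβ'⟩ := hprop δ hδ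
    have h1 : β' + 1 < κ := succ_lt_omega3 hβ'κ
    refine ⟨Classical.choose ((hC i hi).2.1 (β'+1) h1), (hnxt β' h1 i hi).1, ?_, ?_⟩
    · calc δ < β' := hδβ'
        _ < β' + 1 := by rw [Ordinal.add_one_eq_succ]; exact Order.lt_succ β'
        _ ≤ _ := (hnxt β' h1 i hi).2
    · refine lt_of_le_of_lt ?_ hFβ'
      rw [hF]; simp only [dif_pos h1]
      exact Ordinal.le_bsup _ i hi
  · -- closed
    intro α hα h0 H
    refine ⟨hα, fun i hi => (hC i hi).2.2 α hα h0 ?_⟩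
    intro δ hδ
    obtain ⟨c, hc, h1, h2⟩ := H δ hδ
    exact ⟨c, hc.2 i hi, h1, h2⟩

private lemma succ_lt_omega1 {β : Ordinal.{u}} (h : β < (Cardinal.aleph 1).ord) :
    β + 1 < (Cardinal.aleph 1).ord := by
  rw [Ordinal.add_one_eq_succ]; exact omega1_isLimit.succ_lt h

private lemma exists_cof_aleph1 {C : Set Ordinal.{u}}
    (hC : IsClubIn C (Cardinal.aleph 3).ord) :
    ∃ α ∈ C, α < (Cardinal.aleph 3).ord ∧ α.cof = Cardinal.aleph 1 := by
  set κ := (Cardinal.aleph (3 : Ordinal.{u})).ord with hκ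
  set o1 := (Cardinal.aleph (1 : Ordinal.{u})).ord with ho1
  set nxt : Ordinal.{u} → Ordinal.{u} := fun β =>
    if h : β + 1 < κ then Classical.choose (hC.2.1 (β+1) h) else 0 with hnxtdef
  have hnxt : ∀ β (h : β + 1 < κ), nxt β ∈ C ∧ β + 1 ≤ nxt β := by
    intro β h
    obtain ⟨h1, h2⟩ := Classical.choose_spec (hC.2.1 (β+1) h)
    rw [hnxtdef]; simp only [dif_pos h]; exact ⟨h1, h2⟩
  set e : Ordinal.{u} → Ordinal.{u} :=
    Ordinal.lt_wf.fix (fun ξ ih => nxt (Ordinal.bsup ξ ih)) with hedef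
  have he : ∀ ξ, e ξ = nxt (Ordinal.bsup ξ (fun η _ => e η)) := by
    intro ξ
    rw [hedef]
    exact Ordinal.lt_wf.fix_eq _ ξ
  -- invariant
  have key : ∀ ξ, ξ < o1 → e ξ ∈ C ∧ ∀ η, η < ξ → e η < e ξ := by
    intro ξ
    induction ξ using Ordinal.induction with
    | _ ξ ih =>
      intro hξ
      set b := Ordinal.bsup ξ (fun η _ => e η) with hb
      have hbκ : b < κ := by
        refine Ordinal.bsup_lt_ord ?_ (fun η hη => hC.1 (ih η hη (hη.trans hξ)).1)
        have : ξ.card < Cardinal.aleph 1 := Cardinal.lt_ord.1 hξ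
        rw [cof_omega3]; exact this.trans aleph1_lt_aleph3
      have h1 : b + 1 < κ := succ_lt_omega3 hbκ
      have heq : e ξ = nxt b := he ξ
      constructor
      · rw [heq]; exact (hnxt b h1).1
      · intro η hη
        calc e η ≤ b := Ordinal.le_bsup _ η hη
          _ < b + 1 := by rw [Ordinal.add_one_eq_succ]; exact Order.lt_succ b
          _ ≤ nxt b := (hnxt b h1).2
          _ = e ξ := heq.symm
  have heC : ∀ ξ (h : ξ < o1), e ξ ∈ C := fun ξ h => (key ξ h).1
  have hemono : ∀ η ξ (h : ξ < o1), η < ξ → e η < e ξ := fun η ξ h hh => (key ξ h).2 η hh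
  set α := Ordinal.blsub o1 (fun ξ _ => e ξ) with hα
  have hακ : α < κ := by
    refine Ordinal.blsub_lt_ord ?_ (fun ξ hξ => hC.1 (heC ξ hξ))
    rw [Cardinal.card_ord, cof_omega3]; exact aleph1_lt_aleph3
  have ho1pos : (0 : Ordinal.{u}) < o1 := by
    rw [ho1, Cardinal.lt_ord]; simpa using Cardinal.aleph_pos (1 : Ordinal.{u})
  have hαpos : 0 < α := lt_of_le_of_lt (by simp) (Ordinal.lt_blsub _ 0 ho1pos)
  have hαC : α ∈ C := by
    refine hC.2.2 α hακ hαpos ?_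
    intro δ hδ
    obtain ⟨ξ, hξ, hδξ⟩ := Ordinal.lt_blsub_iff.1 hδ
    have hξ1 : ξ + 1 < o1 := succ_lt_omega1 hξ
    refine ⟨e (ξ + 1), heC _ hξ1, ?_, Ordinal.lt_blsub _ _ hξ1⟩
    calc δ ≤ e ξ := hδξ
      _ < e (ξ + 1) := hemono ξ (ξ+1) hξ1 (by rw [Ordinal.add_one_eq_succ]; exact Order.lt_succ ξ)
  -- cofinality
  have hcof_le : α.cof ≤ Cardinal.aleph 1 := by
    have := Ordinal.cof_blsub_le (fun ξ (_ : ξ < o1) => e ξ)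
    rwa [Cardinal.card_ord] at this
  have hcof_ge : Cardinal.aleph 1 ≤ α.cof := by
    by_contra hlt
    push_neg at hlt
    obtain ⟨fa, hfa⟩ := Ordinal.exists_fundamental_sequence α
    have hα.cof.ordlt : α.cof.ord < o1 := Cardinal.ord_lt_ord.2 hlt
    have hchoice : ∀ η (hη : η < α.cof.ord), ∃ ζ, ∃ _ : ζ < o1, fa η hη ≤ e ζ := by
      intro η hη
      have : fa η hη < α := hfa.lt hη
      exact Ordinal.lt_blsub_iff.1 this
    set z := Ordinal.bsup α.cof.ord (fun η hη => Classical.choose (hchoice η hη)) with hz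
    have hzlt : z < o1 := by
      refine Ordinal.bsup_lt_ord ?_ ?_
      · rw [cof_omega1, Cardinal.card_ord]; exact hlt
      · intro η hη
        obtain ⟨hζ, _⟩ := Classical.choose_spec (hchoice η hη)
        exact hζ
    have hz1 : z + 1 < o1 := succ_lt_omega1 hzlt
    have hub : α ≤ e (z + 1) := by
      rw [← hfa.blsub_eq]
      refine Ordinal.blsub_le ?_
      intro η hη
      obtain ⟨hζ, hle⟩ := Classical.choose_spec (hchoice η hη)
      calc fa η hη ≤ e (Classical.choose (hchoice η hη)) := hle
        _ ≤ e z := by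
            rcases lt_or_eq_of_le (Ordinal.le_bsup (fun η hη => Classical.choose (hchoice η hη)) η hη) with h | h
            · exact (hemono _ z hzlt h).le
            · rw [h]
        _ < e (z + 1) := hemono z (z+1) hz1 (by rw [Ordinal.add_one_eq_succ]; exact Order.lt_succ z)
    exact absurd (lt_of_le_of_lt hub (Ordinal.lt_blsub _ _ hz1)) (lt_irrefl α)
  exact ⟨α, hαC, hακ, le_antisymm hcof_le hcof_ge⟩

private lemma lemA {γ : Ordinal.{u}} (hγ : γ.cof = Cardinal.aleph 1)
    {T : Ordinal.{u} → Set Ordinal.{u}}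
    (hstat : ∀ i < (Cardinal.aleph 2).ord, IsStatIn (T i ∩ Set.Iio γ) γ)
    (hdisj : ∀ i < (Cardinal.aleph 2).ord, ∀ j < (Cardinal.aleph 2).ord,
      i ≠ j → T i ∩ T j = ∅) : False := by
  have hcof0 : Cardinal.aleph0 < γ.cof := by rw [hγ]; exact aleph0_lt_aleph1
  have hγlim : Order.IsSuccLimit γ := Ordinal.aleph0_le_cof.1 hcof0.le
  obtain ⟨f, hf⟩ := Ordinal.exists_fundamental_sequence γ
  -- the set of limit points of the range of f
  set Cl : Set Ordinal.{u} :=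
    {α | α < γ ∧ 0 < α ∧ ∀ δ < α, ∃ η, ∃ hη : η < γ.cof.ord, δ < f η hη ∧ f η hη < α} with hCl
  have hmemf : ∀ β (h : β + 1 < γ), ∃ η, ∃ hη : η < γ.cof.ord, β + 1 ≤ f η hη := by
    intro β h
    exact Ordinal.lt_blsub_iff.1 (by rw [hf.blsub_eq]; exact h)
  set F : Ordinal.{u} → Ordinal.{u} := fun β =>
    if h : β + 1 < γ then
      f (Classical.choose (hmemf β h)) (Classical.choose (Classical.choose_spec (hmemf β h)))
    else 0 with hF
  have hFspec : ∀ β < γ, (β < F β ∧ F β < γ) ∧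
      ∃ η, ∃ hη : η < γ.cof.ord, F β = f η hη := by
    intro β hβ
    have h1 : β + 1 < γ := hγlim.succ_lt hβ
    have h2 := Classical.choose_spec (Classical.choose_spec (hmemf β h1))
    rw [hF]; simp only [dif_pos h1]
    exact ⟨⟨lt_of_lt_of_le ((Order.lt_succ β).trans_eq (Ordinal.add_one_eq_succ β).symm) h2,
      hf.lt _⟩, Classical.choose (hmemf β h1),
      Classical.choose (Classical.choose_spec (hmemf β h1)), rfl⟩
  have hclub : IsClubIn Cl γ := by
    refine ⟨fun x hx => hx.1, ?_, ?_⟩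
    · intro β hβ
      obtain ⟨α, hβα, hαγ, hprop⟩ := omega_lim hcof0 F (fun β hβ => (hFspec β hβ).1) hβ
      refine ⟨α, ⟨hαγ, lt_of_le_of_lt (by simp) hβα, ?_⟩, hβα.le⟩
      intro δ hδ
      obtain ⟨β', hβ'γ, hδβ', hFβ'⟩ := hprop δ hδ
      obtain ⟨η, hη, heq⟩ := (hFspec β' hβ'γ).2
      exact ⟨η, hη, heq ▸ (hδβ'.trans (hFspec β' hβ'γ).1.1), heq ▸ hFβ'⟩
    · intro α hα h0 H
      refine ⟨hα, h0, ?_⟩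
      intro δ hδ
      obtain ⟨c, hc, h1, h2⟩ := H δ hδ
      obtain ⟨η, hη, h3, h4⟩ := hc.2.2 δ h1
      exact ⟨η, hη, h3, h4.trans h2⟩
  -- the pressing-down style injection
  have hxi_ex : ∀ c, c ∈ Cl → ∃ η, ∃ hη : η < γ.cof.ord, c ≤ f η hη := by
    intro c hc
    exact Ordinal.lt_blsub_iff.1 (by rw [hf.blsub_eq]; exact hc.1)
  set xi : Ordinal.{u} → Ordinal.{u} := fun c =>
    sInf {η | ∃ hη : η < γ.cof.ord, c ≤ f η hη} with hxidef
  have hxi_mem : ∀ c ∈ Cl, ∃ hη : xi c < γ.cof.ord, c ≤ f (xi c) hη := by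
    intro c hc
    obtain ⟨η, hη, hle⟩ := hxi_ex c hc
    exact csInf_mem (s := {η | ∃ hη : η < γ.cof.ord, c ≤ f η hη}) ⟨η, hη, hle⟩
  have hxi_mono : ∀ c ∈ Cl, ∀ c' ∈ Cl, c < c' → xi c < xi c' := by
    intro c hc c' hc' hlt
    obtain ⟨η, hη, h1, h2⟩ := hc'.2.2 c hlt
    have hle : xi c ≤ η := csInf_le (OrderBot.bddBelow _) ⟨hη, h1.le⟩
    refine lt_of_le_of_lt hle ?_
    by_contra hcon
    push_neg at hcon
    obtain ⟨hη', hle'⟩ := hxi_mem c' hc'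
    have : f (xi c') hη' ≤ f η hη := hf.monotone hη' hη hcon
    exact (hle'.trans this).not_gt h2
  -- pick points
  have hpick : ∀ i (hi : i < (Cardinal.aleph 2).ord),
      ∃ t, t ∈ T i ∧ t ∈ Cl := by
    intro i hi
    obtain ⟨t, ht1, ht2⟩ := hstat i hi Cl hclub
    exact ⟨t, ht1.1, ht2⟩
  set t : ∀ i, i < (Cardinal.aleph 2).ord → Ordinal.{u} :=
    fun i hi => Classical.choose (hpick i hi) with ht
  have htspec : ∀ i hi, t i hi ∈ T i ∧ t i hi ∈ Cl :=
    fun i hi => Classical.choose_spec (hpick i hi)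
  -- injection from Iio ω₂ to Iio ω₁
  have ho1 : γ.cof.ord = (Cardinal.aleph 1).ord := by rw [hγ]
  set Φ : (Set.Iio (Cardinal.aleph (2:Ordinal.{u})).ord) → (Set.Iio (Cardinal.aleph (1:Ordinal.{u})).ord) :=
    fun i => ⟨xi (t i.1 i.2), by
      obtain ⟨hη, _⟩ := hxi_mem _ (htspec i.1 i.2).2
      exact Set.mem_Iio.2 (ho1 ▸ hη)⟩ with hΦ
  have hΦinj : Function.Injective Φ := by
    intro i j hij
    by_contra hne
    have hvne : i.1 ≠ j.1 := fun h => hne (Subtype.ext h)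
    have htne : t i.1 i.2 ≠ t j.1 j.2 := by
      intro heq
      have hmem : t i.1 i.2 ∈ T i.1 ∩ T j.1 := ⟨(htspec i.1 i.2).1, heq ▸ (htspec j.1 j.2).1⟩
      rw [hdisj i.1 i.2 j.1 j.2 hvne] at hmem
      exact hmem
    have hxine : xi (t i.1 i.2) = xi (t j.1 j.2) := congrArg Subtype.val hij
    rcases lt_or_gt_of_ne htne with h | h
    · exact absurd hxine (hxi_mono _ (htspec i.1 i.2).2 _ (htspec j.1 j.2).2 h).ne
    · exact absurd hxine.symm (hxi_mono _ (htspec j.1 j.2).2 _ (htspec i.1 i.2).2 h).ne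
  have hcard := Cardinal.mk_le_of_injective hΦinj
  rw [Ordinal.mk_Iio_ordinal, Ordinal.mk_Iio_ordinal, Cardinal.lift_le,
    Cardinal.card_ord, Cardinal.card_ord] at hcard
  exact absurd hcard (not_le.2 aleph1_lt_aleph2)

private lemma stat_S31 :
    IsStatIn {α | α < (Cardinal.aleph (3 : Ordinal.{u})).ord ∧ α.cof = Cardinal.aleph 1}
      (Cardinal.aleph 3).ord := by
  intro C hC
  obtain ⟨α, h1, h2, h3⟩ := exists_cof_aleph1 hC
  exact ⟨α, ⟨h2, h3⟩, h1⟩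


section Transfer

universe w x

/-- The transfer of a set of ordinals across universes. -/
private def crossSet (S : Set Ordinal.{x}) : Set Ordinal.{w} :=
  {a | ∃ b ∈ S, Ordinal.lift.{w} b = Ordinal.lift.{x} a}

private lemma cross_lt {b b' : Ordinal.{x}} {a a' : Ordinal.{w}}
    (h : Ordinal.lift.{w} b = Ordinal.lift.{x} a)
    (h' : Ordinal.lift.{w} b' = Ordinal.lift.{x} a') : b < b' ↔ a < a' := by
  constructor
  · intro hb
    exact Ordinal.lift_lt.1 (by rw [← h, ← h']; exact Ordinal.lift_lt.2 hb)
  · intro ha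
    exact Ordinal.lift_lt.1 (by rw [h, h']; exact Ordinal.lift_lt.2 ha)

private lemma cross_le {b b' : Ordinal.{x}} {a a' : Ordinal.{w}}
    (h : Ordinal.lift.{w} b = Ordinal.lift.{x} a)
    (h' : Ordinal.lift.{w} b' = Ordinal.lift.{x} a') : b ≤ b' ↔ a ≤ a' := by
  constructor
  · intro hb
    exact Ordinal.lift_le.1 (by rw [← h, ← h']; exact Ordinal.lift_le.2 hb)
  · intro ha
    exact Ordinal.lift_le.1 (by rw [h, h']; exact Ordinal.lift_le.2 ha)

private lemma cross_ex {kx : Ordinal.{x}} {kw : Ordinal.{w}}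
    (hR : Ordinal.lift.{w} kx = Ordinal.lift.{x} kw) {a : Ordinal.{w}} (ha : a < kw) :
    ∃ b < kx, Ordinal.lift.{w} b = Ordinal.lift.{x} a := by
  have h1 : Ordinal.lift.{x} a < Ordinal.lift.{w} kx := by
    rw [hR]; exact Ordinal.lift_lt.2 ha
  obtain ⟨b, hb⟩ := Ordinal.mem_range_lift_of_le h1.le
  refine ⟨b, ?_, hb⟩
  have h2 : Ordinal.lift.{w} b < Ordinal.lift.{w} kx := by rw [hb]; exact h1
  exact Ordinal.lift_lt.1 h2

private lemma cross_ex' {kx : Ordinal.{x}} {kw : Ordinal.{w}}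
    (hR : Ordinal.lift.{w} kx = Ordinal.lift.{x} kw) {b : Ordinal.{x}} (hb : b < kx) :
    ∃ a < kw, Ordinal.lift.{w} b = Ordinal.lift.{x} a := by
  have h1 : Ordinal.lift.{w} b < Ordinal.lift.{x} kw := by
    rw [← hR]; exact Ordinal.lift_lt.2 hb
  obtain ⟨a, ha⟩ := Ordinal.mem_range_lift_of_le h1.le
  refine ⟨a, ?_, ha.symm⟩
  have h2 : Ordinal.lift.{x} a < Ordinal.lift.{x} kw := by rw [ha]; exact h1
  exact Ordinal.lift_lt.1 h2

private lemma cross_inj {b : Ordinal.{x}} {a a' : Ordinal.{w}}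
    (h : Ordinal.lift.{w} b = Ordinal.lift.{x} a)
    (h' : Ordinal.lift.{w} b = Ordinal.lift.{x} a') : a = a' :=
  Ordinal.lift_inj.1 (by rw [← h, ← h'])

private lemma cross_inj' {b b' : Ordinal.{x}} {a : Ordinal.{w}}
    (h : Ordinal.lift.{w} b = Ordinal.lift.{x} a)
    (h' : Ordinal.lift.{w} b' = Ordinal.lift.{x} a) : b = b' :=
  Ordinal.lift_inj.1 (by rw [h, h'])

private lemma cross_zero :
    Ordinal.lift.{w} (0 : Ordinal.{x}) = Ordinal.lift.{x} (0 : Ordinal.{w}) := by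
  simp

private lemma cross_cof {b : Ordinal.{x}} {a : Ordinal.{w}}
    (h : Ordinal.lift.{w} b = Ordinal.lift.{x} a) :
    Cardinal.lift.{w} b.cof = Cardinal.lift.{x} a.cof := by
  rw [Ordinal.lift_cof, Ordinal.lift_cof, h]

private lemma cross_cof0 {b : Ordinal.{x}} {a : Ordinal.{w}}
    (h : Ordinal.lift.{w} b = Ordinal.lift.{x} a)
    (hb : b.cof = Cardinal.aleph0) : a.cof = Cardinal.aleph0 := by
  have h2 := cross_cof h
  rw [hb, Cardinal.lift_aleph0] at h2
  exact Cardinal.lift_inj.1 (by rw [← h2, Cardinal.lift_aleph0])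

private lemma cross_cof1 {b : Ordinal.{x}} {a : Ordinal.{w}}
    (h : Ordinal.lift.{w} b = Ordinal.lift.{x} a)
    (hb : b.cof = Cardinal.aleph 1) : a.cof = Cardinal.aleph 1 := by
  have h2 := cross_cof h
  rw [hb, Cardinal.lift_aleph, Ordinal.lift_one] at h2
  exact Cardinal.lift_inj.1 (by rw [← h2, Cardinal.lift_aleph, Ordinal.lift_one])

private lemma cross_aleph_ord (n : ℕ) [n.AtLeastTwo] :
    Ordinal.lift.{w} ((Cardinal.aleph (OfNat.ofNat n : Ordinal.{x})).ord) =
      Ordinal.lift.{x} ((Cardinal.aleph (OfNat.ofNat n : Ordinal.{w})).ord) := by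
  rw [Cardinal.lift_ord, Cardinal.lift_ord, Cardinal.lift_aleph, Cardinal.lift_aleph,
    Ordinal.lift_ofNat, Ordinal.lift_ofNat]

private lemma cross_club {kx : Ordinal.{x}} {kw : Ordinal.{w}}
    (hR : Ordinal.lift.{w} kx = Ordinal.lift.{x} kw)
    {D : Set Ordinal.{x}} (hD : IsClubIn D kx) : IsClubIn (crossSet.{w,x} D) kw := by
  refine ⟨?_, ?_, ?_⟩
  · rintro a ⟨b, hbD, hb⟩
    exact Set.mem_Iio.2 ((cross_lt hb hR).1 (hD.1 hbD))
  · intro β hβ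
    obtain ⟨bβ, hbβx, hbβ⟩ := cross_ex hR hβ
    obtain ⟨c, hcD, hbc⟩ := hD.2.1 bβ hbβx
    obtain ⟨ac, hacw, hac⟩ := cross_ex' hR (hD.1 hcD)
    exact ⟨ac, ⟨c, hcD, hac⟩, (cross_le hbβ hac).1 hbc⟩
  · intro α hα h0 H
    obtain ⟨bα, hbαx, hbα⟩ := cross_ex hR hα
    refine ⟨bα, hD.2.2 bα hbαx ((cross_lt cross_zero hbα).2 h0) ?_, hbα⟩
    intro δ hδ
    obtain ⟨d, hdα, hd⟩ := cross_ex' hbα hδ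
    obtain ⟨c, hcmem, hdc, hcα⟩ := H d hdα
    obtain ⟨bc, hbcD, hbc⟩ := hcmem
    exact ⟨bc, hbcD, (cross_lt hd hbc).2 hdc, (cross_lt hbc hbα).2 hcα⟩

private lemma cross_stat {kx : Ordinal.{x}} {kw : Ordinal.{w}}
    (hR : Ordinal.lift.{w} kx = Ordinal.lift.{x} kw)
    {S : Set Ordinal.{x}} (hS : IsStatIn S kx) : IsStatIn (crossSet.{w,x} S) kw := by
  intro D hD
  have hD' : IsClubIn (crossSet.{x,w} D) kx := cross_club hR.symm hD
  obtain ⟨b, hbS, hbD'⟩ := hS _ hD'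
  obtain ⟨a, haD, ha⟩ := hbD'
  exact ⟨a, ⟨b, hbS, ha.symm⟩, haD⟩

end Transfer

private theorem stmt_core
    (T : Ordinal.{u} → Set Ordinal.{u})
    (hT : ∀ i < (Cardinal.aleph 2).ord,
      T i ⊆ {α | α < (Cardinal.aleph 3).ord ∧ Ordinal.cof α = Cardinal.aleph0} ∧
      IsStatIn (T i) (Cardinal.aleph 3).ord)
    (hdisj : ∀ i < (Cardinal.aleph 2).ord, ∀ j < (Cardinal.aleph 2).ord,
      i ≠ j → T i ∩ T j = ∅) :
    ∃ S A : Set Ordinal.{u},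
      S ⊆ {α | α < (Cardinal.aleph 3).ord ∧ Ordinal.cof α = Cardinal.aleph0} ∧
      IsStatIn S (Cardinal.aleph 3).ord ∧
      A ⊆ {α | α < (Cardinal.aleph 3).ord ∧ Ordinal.cof α = Cardinal.aleph 1} ∧
      IsStatIn A (Cardinal.aleph 3).ord ∧
      ∀ γ ∈ A, ¬ IsStatIn (S ∩ Set.Iio γ) γ := by
  classical
  set A : Ordinal.{u} → Set Ordinal.{u} := fun i =>
    {γ | (γ < (Cardinal.aleph 3).ord ∧ γ.cof = Cardinal.aleph 1) ∧
      ¬ IsStatIn (T i ∩ Set.Iio γ) γ} with hA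
  by_cases h : ∃ i, i < (Cardinal.aleph 2).ord ∧ IsStatIn (A i) (Cardinal.aleph 3).ord
  · obtain ⟨i, hi, hstat⟩ := h
    exact ⟨T i, A i, (hT i hi).1, (hT i hi).2, fun γ hγ => hγ.1, hstat, fun γ hγ => hγ.2⟩
  · exfalso
    push_neg at h
    have hclubs : ∀ i, i < (Cardinal.aleph 2).ord →
        ∃ C, IsClubIn C (Cardinal.aleph 3).ord ∧ A i ∩ C = ∅ := by
      intro i hi
      have h2 := h i hi
      rw [IsStatIn] at h2
      push_neg at h2
      obtain ⟨C, hC1, hC2⟩ := h2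
      exact ⟨C, hC1, hC2⟩
    set C : Ordinal → Set Ordinal := fun i =>
      if hi : i < (Cardinal.aleph 2).ord then Classical.choose (hclubs i hi) else ∅ with hC
    have hCspec : ∀ i (hi : i < (Cardinal.aleph 2).ord),
        IsClubIn (C i) (Cardinal.aleph 3).ord ∧ A i ∩ C i = ∅ := by
      intro i hi
      rw [hC]; simp only [dif_pos hi]
      exact Classical.choose_spec (hclubs i hi)
    have hD := club_iInter (C := C) (fun i hi => (hCspec i hi).1)
    obtain ⟨γ, hγ1, hγ2⟩ := stat_S31 _ hD
    refine lemA hγ1.2 (fun i hi => ?_) hdisj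
    by_contra hns
    have hmem : γ ∈ A i ∩ C i := ⟨⟨hγ1, hns⟩, hγ2.2 i hi⟩
    rw [(hCspec i hi).2] at hmem
    exact hmem

universe u1 u2 u3

private theorem stmt_aux
    (T : Ordinal.{u1} → Set Ordinal.{u2})
    (hT : ∀ i < (Cardinal.aleph 2).ord,
      T i ⊆ {α | α < (Cardinal.aleph 3).ord ∧ Ordinal.cof α = Cardinal.aleph0} ∧
      IsStatIn (T i) (Cardinal.aleph 3).ord)
    (hdisj : ∀ i < (Cardinal.aleph 2).ord, ∀ j < (Cardinal.aleph 2).ord,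
      i ≠ j → T i ∩ T j = ∅) :
    ∃ S A : Set Ordinal.{u3},
      S ⊆ {α | α < (Cardinal.aleph 3).ord ∧ Ordinal.cof α = Cardinal.aleph0} ∧
      IsStatIn S (Cardinal.aleph 3).ord ∧
      A ⊆ {α | α < (Cardinal.aleph 3).ord ∧ Ordinal.cof α = Cardinal.aleph 1} ∧
      IsStatIn A (Cardinal.aleph 3).ord ∧
      ∀ γ ∈ A, ¬ IsStatIn (S ∩ Set.Iio γ) γ := by
  classical
  have hc2 := cross_aleph_ord.{u3, u1} 2
  have hc3 := cross_aleph_ord.{u3, u2} 3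
  have hpick : ∀ i : Ordinal.{u3}, i < (Cardinal.aleph 2).ord →
      ∃ i₁ < (Cardinal.aleph 2).ord,
        Ordinal.lift.{u3} i₁ = Ordinal.lift.{u1} i ∧
        (crossSet.{u3, u2} (T i₁) ⊆
            {α | α < (Cardinal.aleph 3).ord ∧ Ordinal.cof α = Cardinal.aleph0} ∧
          IsStatIn (crossSet.{u3, u2} (T i₁)) (Cardinal.aleph 3).ord) := by
    intro i hi
    obtain ⟨i₁, hi₁, hRi⟩ := cross_ex hc2 hi
    refine ⟨i₁, hi₁, hRi, ?_, cross_stat hc3 (hT i₁ hi₁).2⟩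
    rintro a ⟨b, hbT, hb⟩
    obtain ⟨hb1, hb2⟩ := (hT i₁ hi₁).1 hbT
    exact ⟨(cross_lt hb hc3).1 hb1, cross_cof0 hb hb2⟩
  set T3 : Ordinal.{u3} → Set Ordinal.{u3} := fun i =>
    if h : i < (Cardinal.aleph 2).ord then
      crossSet.{u3, u2} (T (Classical.choose (hpick i h))) else ∅
    with hT3def
  have hT3 : ∀ i < (Cardinal.aleph 2).ord,
      T3 i ⊆ {α | α < (Cardinal.aleph 3).ord ∧ Ordinal.cof α = Cardinal.aleph0} ∧
      IsStatIn (T3 i) (Cardinal.aleph 3).ord := by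
    intro i hi
    rw [hT3def]; simp only [dif_pos hi]
    exact (Classical.choose_spec (hpick i hi)).2.2
  have hdisj3 : ∀ i < (Cardinal.aleph 2).ord, ∀ j < (Cardinal.aleph 2).ord,
      i ≠ j → T3 i ∩ T3 j = ∅ := by
    intro i hi j hj hij
    rw [hT3def]; simp only [dif_pos hi, dif_pos hj]
    obtain ⟨hi₁, hRi, _⟩ := Classical.choose_spec (hpick i hi)
    obtain ⟨hj₁, hRj, _⟩ := Classical.choose_spec (hpick j hj)
    have hne : Classical.choose (hpick i hi) ≠ Classical.choose (hpick j hj) := by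
      intro heq
      exact hij (cross_inj hRi (heq ▸ hRj))
    ext a
    simp only [Set.mem_inter_iff, Set.mem_empty_iff_false, iff_false]
    rintro ⟨⟨b, hbT, hb⟩, ⟨b', hbT', hb'⟩⟩
    have hbb : b = b' := cross_inj' hb hb'
    have hTT := hdisj _ hi₁ _ hj₁ hne
    have hmem : b ∈ T (Classical.choose (hpick i hi)) ∩ T (Classical.choose (hpick j hj)) :=
      ⟨hbT, hbb ▸ hbT'⟩
    rw [hTT] at hmem
    exact hmem
  exact stmt_core T3 hT3 hdisj3

/-- Assuming `ω₂`-many pairwise disjoint stationary subsets of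
`S³₀ = {α < ω₃ : cf α = ω}` exist, there are a stationary `S ⊆ S³₀` and a
stationary `A ⊆ S³₁ = {α < ω₃ : cf α = ω₁}` such that `S ∩ γ` is not
stationary in `γ` for any `γ ∈ A`. -/
theorem stmt1
    (T : Ordinal → Set Ordinal)
    (hT : ∀ i < (Cardinal.aleph 2).ord,
      T i ⊆ {α | α < (Cardinal.aleph 3).ord ∧ Ordinal.cof α = Cardinal.aleph0} ∧
      IsStatIn (T i) (Cardinal.aleph 3).ord)
    (hdisj : ∀ i < (Cardinal.aleph 2).ord, ∀ j < (Cardinal.aleph 2).ord,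
      i ≠ j → T i ∩ T j = ∅) :
    ∃ S A : Set Ordinal,
      S ⊆ {α | α < (Cardinal.aleph 3).ord ∧ Ordinal.cof α = Cardinal.aleph0} ∧
      IsStatIn S (Cardinal.aleph 3).ord ∧
      A ⊆ {α | α < (Cardinal.aleph 3).ord ∧ Ordinal.cof α = Cardinal.aleph 1} ∧
      IsStatIn A (Cardinal.aleph 3).ord ∧
      ∀ γ ∈ A, ¬ IsStatIn (S ∩ Set.Iio γ) γ := by
  exact stmt_aux T hT hdisj
end

section
/- Let k < m < n−1 be natural numbers. There exist stationary sets S ⊆ {α < ω_n : cf α = ω_k} and A ⊆ {α < ω_n : cf α = ω_m} such that S does not reflect at any γ ∈ A, i.e., S ∩ γ is nonstationary in γ for all γ ∈ A. (Assume {α < ω_n : cf α = ω_k} splits into ω_{m+1} pairwise disjoint stationary sets.) -/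
open Ordinal Cardinal Set

universe u

lemma exists_omega_closure {γ : Ordinal.{u}} (hcof : ℵ₀ < γ.cof)
    (g : Ordinal.{u} → Ordinal.{u}) (hg : ∀ x < γ, x < g x ∧ g x < γ)
    {β : Ordinal.{u}} (hβ : β < γ) :
    ∃ α, β < α ∧ α < γ ∧ ∀ β' < α, ∃ x, β' ≤ x ∧ x < α ∧ x < γ ∧ g x < α := by
  set chain : ℕ → Ordinal.{u} := fun t => g^[t] β with hchain
  have hstep : ∀ t, chain (t + 1) = g (chain t) := fun t =>
    Function.iterate_succ_apply' g t β
  have hlt : ∀ t, chain t < γ := by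
    intro t
    induction t with
    | zero => simpa [hchain] using hβ
    | succ t ih => rw [hstep]; exact (hg _ ih).2
  have hmono : ∀ t, chain t < chain (t + 1) := fun t => by
    rw [hstep]; exact (hg _ (hlt t)).1
  have hbdd : BddAbove (Set.range chain) := ⟨γ, by rintro x ⟨t, rfl⟩; exact (hlt t).le⟩
  set α := ⨆ t, chain t with hα
  have hle : ∀ t, chain t ≤ α := fun t => le_ciSup hbdd t
  have hαγ : α < γ := by
    refine Ordinal.iSup_lt_ord_lift ?_ hlt
    simpa [Cardinal.mk_nat] using hcof
  refine ⟨α, lt_of_lt_of_le (hmono 0) (hle 1), hαγ, fun β' hβ' => ?_⟩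
  obtain ⟨t, ht⟩ := exists_lt_of_lt_ciSup hβ'
  refine ⟨chain t, ht.le, lt_of_lt_of_le (hmono t) (hle _), hlt t, ?_⟩
  rw [← hstep]
  exact lt_of_lt_of_le (hmono (t + 1)) (hle _)

lemma isClubIn_biInter {γ ν : Ordinal.{u}} (hcof : ℵ₀ < γ.cof)
    (D : Ordinal.{u} → Set Ordinal.{u}) (hD : ∀ i < ν, IsClubIn (D i) γ)
    (hν0 : 0 < ν) (hνc : ν.card < γ.cof) :
    IsClubIn (⋂ i ∈ Set.Iio ν, D i) γ := by
  have hγ : Order.IsSuccLimit γ := Ordinal.aleph0_le_cof.1 hcof.le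
  have he : ∀ i x, ∃ c, i < ν → x < γ → c ∈ D i ∧ x < c ∧ c < γ := by
    intro i x
    by_cases h : i < ν ∧ x < γ
    · obtain ⟨c, hc, hxc⟩ := (hD i h.1).2.1 (x + 1)
        (by rw [Ordinal.add_one_eq_succ]; exact hγ.succ_lt h.2)
      refine ⟨c, fun _ _ => ⟨hc, ?_, (hD i h.1).1 hc⟩⟩
      exact lt_of_lt_of_le (by rw [Ordinal.add_one_eq_succ]; exact Order.lt_succ x) hxc
    · exact ⟨0, fun h1 h2 => absurd ⟨h1, h2⟩ h⟩
  choose e he' using he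
  set g : Ordinal.{u} → Ordinal.{u} := fun x => Ordinal.bsup ν (fun i _ => e i x) + 1 with hgdef
  have hbsup : ∀ x < γ, Ordinal.bsup ν (fun i _ => e i x) < γ := by
    intro x hx
    exact Ordinal.bsup_lt_ord hνc fun i hi => (he' i x hi hx).2.2
  have hsucc : ∀ a : Ordinal.{u}, a < a + 1 := fun a => by
    rw [Ordinal.add_one_eq_succ]; exact Order.lt_succ a
  have hg : ∀ x < γ, x < g x ∧ g x < γ := by
    intro x hx
    constructor
    · have h1 : x < e 0 x := (he' 0 x hν0 hx).2.1
      have h2 : e 0 x ≤ Ordinal.bsup ν (fun i _ => e i x) := Ordinal.le_bsup _ 0 hν0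
      exact lt_trans h1 (lt_of_le_of_lt h2 (hsucc _))
    · have h3 := hγ.succ_lt (hbsup x hx)
      rw [← Ordinal.add_one_eq_succ] at h3
      exact h3
  refine ⟨?_, ?_, ?_⟩
  · intro x hx
    exact (hD 0 hν0).1 (Set.mem_iInter₂.1 hx 0 hν0)
  · intro β hβ
    obtain ⟨α, hβα, hαγ, hcl⟩ := exists_omega_closure hcof g hg hβ
    refine ⟨α, Set.mem_iInter₂.2 fun i hi => ?_, hβα.le⟩
    refine (hD i hi).2.2 α hαγ (lt_of_le_of_lt (zero_le (a := β)) hβα) fun β' hβ' => ?_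
    obtain ⟨x, h1, h2, h3, h4⟩ := hcl β' hβ'
    refine ⟨e i x, (he' i x hi h3).1, lt_of_le_of_lt h1 (he' i x hi h3).2.1, ?_⟩
    have h5 : e i x ≤ Ordinal.bsup ν (fun i _ => e i x) := Ordinal.le_bsup _ i hi
    exact lt_trans (lt_of_le_of_lt h5 (hsucc _)) h4
  · intro α hαγ hα0 hlim
    refine Set.mem_iInter₂.2 fun i hi => (hD i hi).2.2 α hαγ hα0 fun β hβ => ?_
    obtain ⟨c, hc, h1, h2⟩ := hlim β hβ
    exact ⟨c, Set.mem_iInter₂.1 hc i hi, h1, h2⟩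

lemma isStatIn_cofSet {κ μ : Cardinal.{u}} (hκ : κ.IsRegular) (hμ : μ.IsRegular) (hμκ : μ < κ) :
    IsStatIn {α | α < κ.ord ∧ α.cof = μ} κ.ord := by
  intro C hC
  have hsucc : ∀ a : Ordinal.{u}, a < a + 1 := fun a => by
    rw [Ordinal.add_one_eq_succ]; exact Order.lt_succ a
  have hlim : Order.IsSuccLimit κ.ord := Cardinal.isSuccLimit_ord hκ.aleph0_le
  have hcof : κ.ord.cof = κ := hκ.cof_eq
  set s := C ∪ Set.Ici κ.ord with hs
  have hsub : ¬ BddAbove s := by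
    rintro ⟨b, hb⟩
    have h1 : max b κ.ord + 1 ∈ s := Or.inr
      (le_trans (le_max_right _ _) (le_of_lt (hsucc _)))
    have h2 := hb h1
    have h3 : b < max b κ.ord + 1 := lt_of_le_of_lt (le_max_left _ _) (hsucc _)
    exact absurd h2 (not_le.2 h3)
  set e := Ordinal.enumOrd s with he
  have emem : ∀ j, e j ∈ s := fun j => Ordinal.enumOrd_mem hsub j
  have emono : StrictMono e := Ordinal.enumOrd_strictMono hsub
  have key : ∀ j, j < κ.ord → e j ∈ C := by
    intro j
    induction j using Ordinal.induction with
    | _ j IH =>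
    intro hj
    set b := Ordinal.bsup j (fun k _ => e k) with hb
    have hbκ : b < κ.ord := Ordinal.bsup_lt_ord (by rw [hcof]; exact Cardinal.lt_ord.1 hj)
      (fun k hk => hC.1 (IH k hk (hk.trans hj)))
    obtain ⟨c, hcC, hbc⟩ := hC.2.1 (b + 1) (hsucc b |>.trans_le (le_of_lt (by
      have := hlim.succ_lt hbκ; rwa [← Ordinal.add_one_eq_succ] at this)) |> fun h => by
      have := hlim.succ_lt hbκ; rwa [← Ordinal.add_one_eq_succ] at this)
    have hejc : e j ≤ c := Ordinal.enumOrd_le_of_forall_lt (Or.inl hcC)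
      (fun k hk => lt_of_le_of_lt (Ordinal.le_bsup _ k hk) (lt_of_lt_of_le (hsucc b) hbc))
    have hejκ : e j < κ.ord := lt_of_le_of_lt hejc (hC.1 hcC)
    rcases emem j with h | h
    · exact h
    · exact absurd h (not_le.2 hejκ)
  have hμord : μ.ord < κ.ord := Cardinal.ord_lt_ord.2 hμκ
  have hμlim : Order.IsSuccLimit μ.ord := Cardinal.isSuccLimit_ord hμ.aleph0_le
  set α := Ordinal.bsup μ.ord (fun j _ => e j) with hα
  have heα : ∀ j < μ.ord, e j < α := by
    intro j hj
    have h1 : j + 1 < μ.ord := by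
      have := hμlim.succ_lt hj; rwa [← Ordinal.add_one_eq_succ] at this
    exact lt_of_lt_of_le (emono (hsucc j)) (Ordinal.le_bsup _ (j + 1) h1)
  have hακ : α < κ.ord := Ordinal.bsup_lt_ord
    (by rw [hcof, Cardinal.card_ord]; exact hμκ)
    (fun j hj => hC.1 (key j (hj.trans hμord)))
  have hα0 : 0 < α := lt_of_le_of_lt (zero_le (a := e 0)) (heα 0 hμ.ord_pos)
  have hαC : α ∈ C := by
    refine hC.2.2 α hακ hα0 fun β hβ => ?_
    obtain ⟨j, hj, hβj⟩ := (Ordinal.lt_bsup _).1 hβ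
    exact ⟨e j, key j (hj.trans hμord), hβj, heα j hj⟩
  have hcof_le : α.cof ≤ μ := by
    have h1 := Ordinal.cof_bsup_le (o := μ.ord) (f := fun j _ => e j) (fun i h => heα i h)
    rwa [Cardinal.card_ord] at h1
  have hcof_ge : μ ≤ α.cof := by
    obtain ⟨ι, h, hlsub, hcard⟩ := Ordinal.exists_lsub_cof α
    have hne : ∀ i, ∃ j, j < μ.ord ∧ h i < e j := by
      intro i
      have h1 : h i < α := hlsub ▸ Ordinal.lt_lsub h i
      obtain ⟨j, hj, hij⟩ := (Ordinal.lt_bsup _).1 h1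
      exact ⟨j, hj, hij⟩
    choose p hp1 hp2 using hne
    have hub : μ.ord ≤ Ordinal.lsub p := by
      by_contra hcon
      push_neg at hcon
      have h1 : e (Ordinal.lsub p) < α := heα _ hcon
      rw [← hlsub] at h1
      obtain ⟨i, hi⟩ := Ordinal.lt_lsub_iff.1 h1
      have h2 : Ordinal.lsub p < p i := emono.lt_iff_lt.1 (lt_of_le_of_lt hi (hp2 i))
      exact absurd (Ordinal.lt_lsub p i) (not_lt.2 h2.le)
    have hlb : Ordinal.lsub p ≤ μ.ord := Ordinal.lsub_le fun i => hp1 i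
    have heq : Ordinal.lsub p = μ.ord := le_antisymm hlb hub
    calc μ = μ.ord.cof := hμ.cof_eq.symm
      _ = (Ordinal.lsub p).cof := by rw [heq]
      _ ≤ #ι := Ordinal.cof_lsub_le p
      _ = α.cof := hcard
  exact ⟨α, ⟨hακ, le_antisymm hcof_le hcof_ge⟩, hαC⟩

theorem stmt2_core (k m n : ℕ) (hkm : k < m) (hmn : m + 1 < n)
    (T : Ordinal.{u} → Set Ordinal.{u})
    (hT : ∀ i < (Cardinal.aleph (m + 1)).ord,
      T i ⊆ {α | α < (Cardinal.aleph n).ord ∧ Ordinal.cof α = Cardinal.aleph k} ∧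
      IsStatIn (T i) (Cardinal.aleph n).ord)
    (hdisj : ∀ i < (Cardinal.aleph (m + 1)).ord, ∀ j < (Cardinal.aleph (m + 1)).ord,
      i ≠ j → T i ∩ T j = ∅) :
    ∃ S A : Set Ordinal.{u},
      S ⊆ {α | α < (Cardinal.aleph n).ord ∧ Ordinal.cof α = Cardinal.aleph k} ∧
      IsStatIn S (Cardinal.aleph n).ord ∧
      A ⊆ {α | α < (Cardinal.aleph n).ord ∧ Ordinal.cof α = Cardinal.aleph m} ∧
      IsStatIn A (Cardinal.aleph n).ord ∧
      ∀ γ ∈ A, ¬ IsStatIn (S ∩ Set.Iio γ) γ := by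
  classical
  have hsucc : ∀ a : Ordinal, a < a + 1 := fun a => by
    rw [Ordinal.add_one_eq_succ]; exact Order.lt_succ a
  have hregμ : (Cardinal.aleph (m : Ordinal)).IsRegular := by
    obtain ⟨m', rfl⟩ : ∃ m', m = m' + 1 := ⟨m - 1, by omega⟩
    rw [show ((m' + 1 : ℕ) : Ordinal) = Order.succ (m' : Ordinal) by
      push_cast; exact Ordinal.add_one_eq_succ _]
    exact Cardinal.isRegular_aleph_succ _
  have hregν : (Cardinal.aleph ((m : Ordinal) + 1)).IsRegular := by
    rw [Ordinal.add_one_eq_succ]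
    exact Cardinal.isRegular_aleph_succ _
  have hregκ : (Cardinal.aleph (n : Ordinal)).IsRegular := by
    obtain ⟨n', rfl⟩ : ∃ n', n = n' + 1 := ⟨n - 1, by omega⟩
    rw [show ((n' + 1 : ℕ) : Ordinal) = Order.succ (n' : Ordinal) by
      push_cast; exact Ordinal.add_one_eq_succ _]
    exact Cardinal.isRegular_aleph_succ _
  have hμν : Cardinal.aleph (m : Ordinal) < Cardinal.aleph ((m : Ordinal) + 1) :=
    Cardinal.aleph_lt_aleph.2 (hsucc _)
  have hνκ : Cardinal.aleph ((m : Ordinal) + 1) < Cardinal.aleph (n : Ordinal) := by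
    refine Cardinal.aleph_lt_aleph.2 ?_
    exact_mod_cast hmn
  have hμκ : Cardinal.aleph (m : Ordinal) < Cardinal.aleph (n : Ordinal) := hμν.trans hνκ
  have hℵ0μ : ℵ₀ < Cardinal.aleph (m : Ordinal) := by
    rw [← Cardinal.aleph_zero]
    refine Cardinal.aleph_lt_aleph.2 ?_
    have : (0 : ℕ) < m := by omega
    exact_mod_cast this
  have hcofκ : (Cardinal.aleph (n : Ordinal)).ord.cof = Cardinal.aleph (n : Ordinal) :=
    hregκ.cof_eq
  have hℵ0κ : ℵ₀ < (Cardinal.aleph (n : Ordinal)).ord.cof := by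
    rw [hcofκ]; exact hℵ0μ.trans hμκ
  have hA₀ : IsStatIn
      {α | α < (Cardinal.aleph (n : Ordinal)).ord ∧ α.cof = Cardinal.aleph (m : Ordinal)}
      (Cardinal.aleph (n : Ordinal)).ord := isStatIn_cofSet hregκ hregμ hμκ
  have main : ∃ i < (Cardinal.aleph ((m : Ordinal) + 1)).ord,
      IsStatIn {γ | (γ < (Cardinal.aleph (n : Ordinal)).ord ∧
          γ.cof = Cardinal.aleph (m : Ordinal)) ∧
        ¬ IsStatIn (T i ∩ Set.Iio γ) γ} (Cardinal.aleph (n : Ordinal)).ord := by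
    by_contra hcon
    push_neg at hcon
    have hDex : ∀ i, ∃ Dset : Set Ordinal, i < (Cardinal.aleph ((m : Ordinal) + 1)).ord →
        (IsClubIn Dset (Cardinal.aleph (n : Ordinal)).ord ∧
          ∀ γ, γ ∈ Dset →
            (γ < (Cardinal.aleph (n : Ordinal)).ord ∧ γ.cof = Cardinal.aleph (m : Ordinal)) →
            IsStatIn (T i ∩ Set.Iio γ) γ) := by
      intro i
      by_cases hi : i < (Cardinal.aleph ((m : Ordinal) + 1)).ord
      · have h1 := hcon i hi
        have h1' : ∃ Dset, IsClubIn Dset (Cardinal.aleph (n : Ordinal)).ord ∧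
            ({γ | (γ < (Cardinal.aleph (n : Ordinal)).ord ∧
              γ.cof = Cardinal.aleph (m : Ordinal)) ∧
              ¬ IsStatIn (T i ∩ Set.Iio γ) γ} ∩ Dset) = ∅ := by
          by_contra h2
          push_neg at h2
          exact h1 h2
        obtain ⟨Dset, hclub, hemp⟩ := h1'
        refine ⟨Dset, fun _ => ⟨hclub, fun γ hγD hγA => ?_⟩⟩
        by_contra hns
        have hmem2 : γ ∈ ({γ | (γ < (Cardinal.aleph (n : Ordinal)).ord ∧
            γ.cof = Cardinal.aleph (m : Ordinal)) ∧
            ¬ IsStatIn (T i ∩ Set.Iio γ) γ} ∩ Dset) := ⟨⟨hγA, hns⟩, hγD⟩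
        rw [hemp] at hmem2
        exact hmem2
      · exact ⟨∅, fun h => absurd h hi⟩
    choose D hD using hDex
    have hclubD := isClubIn_biInter hℵ0κ D (fun i hi => (hD i hi).1) hregν.ord_pos
      (by rw [Cardinal.card_ord, hcofκ]; exact hνκ)
    obtain ⟨γ, hγA₀, hγD⟩ := hA₀ _ hclubD
    have hstatγ : ∀ i < (Cardinal.aleph ((m : Ordinal) + 1)).ord,
        IsStatIn (T i ∩ Set.Iio γ) γ := fun i hi =>
      (hD i hi).2 γ (Set.mem_iInter₂.1 hγD i hi) hγA₀
    have hcofγ : γ.cof = Cardinal.aleph (m : Ordinal) := hγA₀.2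
    have hℵ0γ : ℵ₀ < γ.cof := by rw [hcofγ]; exact hℵ0μ
    have hγlim : Order.IsSuccLimit γ := Ordinal.aleph0_le_cof.1 hℵ0γ.le
    obtain ⟨ι, f, hlsub, hcard⟩ := Ordinal.exists_lsub_cof γ
    have hU : ∀ x, ∃ u, x < γ → (∃ i', f i' = u) ∧ x < u ∧ u < γ := by
      intro x
      by_cases hx : x < γ
      · have h1 : x + 1 < Ordinal.lsub f := by
          rw [hlsub, Ordinal.add_one_eq_succ]
          exact hγlim.succ_lt hx
        obtain ⟨i', hi'⟩ := Ordinal.lt_lsub_iff.1 h1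
        exact ⟨f i', fun _ => ⟨⟨i', rfl⟩, lt_of_lt_of_le (hsucc x) hi',
          hlsub ▸ Ordinal.lt_lsub f i'⟩⟩
      · exact ⟨0, fun h => absurd h hx⟩
    choose g hg using hU
    set Cl := {α | α < γ ∧ ∀ β < α, ∃ u, (∃ i', f i' = u) ∧ β < u ∧ u < α} with hCldef
    have hClclub : IsClubIn Cl γ := by
      refine ⟨fun x hx => hx.1, ?_, ?_⟩
      · intro β hβ
        obtain ⟨α, hβα, hαγ, hcl⟩ := exists_omega_closure hℵ0γ g
          (fun x hx => ⟨(hg x hx).2.1, (hg x hx).2.2⟩) hβ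
        refine ⟨α, ?_, hβα.le⟩
        show α < γ ∧ ∀ β < α, ∃ u, (∃ i', f i' = u) ∧ β < u ∧ u < α
        refine ⟨hαγ, ?_⟩
        intro β' hβ'
        obtain ⟨x, h1, h2, h3, h4⟩ := hcl β' hβ'
        exact ⟨g x, (hg x h3).1, lt_of_le_of_lt h1 (hg x h3).2.1, h4⟩
      · intro α hαγ hα0 hlp
        show α < γ ∧ ∀ β < α, ∃ u, (∃ i', f i' = u) ∧ β < u ∧ u < α
        refine ⟨hαγ, fun β hβ => ?_⟩
        obtain ⟨c, hcCl, hβc, hcα⟩ := hlp β hβ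
        obtain ⟨u, hu1, hu2, hu3⟩ := hcCl.2 β hβc
        exact ⟨u, hu1, hu2, hu3.trans hcα⟩
    set w : Ordinal → Ordinal := fun x => sInf {u | (∃ i', f i' = u) ∧ x ≤ u} with hwdef
    have hwspec : ∀ x, x < γ → (∃ i', f i' = w x) ∧ x ≤ w x := by
      intro x hx
      obtain ⟨h1, h2, h3⟩ := hg x hx
      exact csInf_mem (s := {u | (∃ i', f i' = u) ∧ x ≤ u}) ⟨g x, ⟨h1, h2.le⟩⟩
    have hwmono : ∀ x ∈ Cl, ∀ y ∈ Cl, x < y → w x < w y := by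
      intro x hx y hy hxy
      obtain ⟨u, hu1, hu2, hu3⟩ := hy.2 x hxy
      have h1 : w x ≤ u := csInf_le (OrderBot.bddBelow _) ⟨hu1, hu2.le⟩
      exact lt_of_le_of_lt h1 (lt_of_lt_of_le hu3 (hwspec y hy.1).2)
    have hyex : ∀ i, ∃ y, i < (Cardinal.aleph ((m : Ordinal) + 1)).ord →
        y ∈ T i ∧ y ∈ Cl := by
      intro i
      by_cases hi : i < (Cardinal.aleph ((m : Ordinal) + 1)).ord
      · obtain ⟨y, ⟨hyT, _⟩, hyCl⟩ := hstatγ i hi Cl hClclub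
        exact ⟨y, fun _ => ⟨hyT, hyCl⟩⟩
      · exact ⟨0, fun h => absurd h hi⟩
    choose Y hY using hyex
    have hQmem : ∀ i : ↥(Set.Iio (Cardinal.aleph ((m : Ordinal) + 1)).ord),
        w (Y i) ∈ Set.range f := by
      intro i
      obtain ⟨i', hi'⟩ := (hwspec (Y i) ((hY i (Set.mem_Iio.1 i.2)).2.1)).1
      exact ⟨i', hi'⟩
    have hQinj : Function.Injective
        (fun i : ↥(Set.Iio (Cardinal.aleph ((m : Ordinal) + 1)).ord) =>
          (⟨w (Y i), hQmem i⟩ : ↥(Set.range f))) := by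
      intro i j hij
      by_contra hne
      have hne' : (i : Ordinal) ≠ (j : Ordinal) := fun h => hne (Subtype.ext h)
      have hYT_i := (hY i (Set.mem_Iio.1 i.2)).1
      have hYT_j := (hY j (Set.mem_Iio.1 j.2)).1
      have hYCl_i := (hY i (Set.mem_Iio.1 i.2)).2
      have hYCl_j := (hY j (Set.mem_Iio.1 j.2)).2
      have hYne : Y (i : Ordinal) ≠ Y (j : Ordinal) := by
        intro h
        have hd := hdisj i (Set.mem_Iio.1 i.2) j (Set.mem_Iio.1 j.2) hne'
        have hmem : Y (i : Ordinal) ∈ T (i : Ordinal) ∩ T (j : Ordinal) :=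
          ⟨hYT_i, h ▸ hYT_j⟩
        rw [hd] at hmem
        exact hmem
      have hval : w (Y (i : Ordinal)) = w (Y (j : Ordinal)) := congrArg Subtype.val hij
      rcases lt_or_gt_of_ne hYne with h | h
      · exact absurd hval (ne_of_lt (hwmono _ hYCl_i _ hYCl_j h))
      · exact absurd hval (ne_of_gt (hwmono _ hYCl_j _ hYCl_i h))
    have h1 : #↥(Set.Iio (Cardinal.aleph ((m : Ordinal) + 1)).ord) ≤ #↥(Set.range f) :=
      Cardinal.mk_le_of_injective hQinj
    rw [Ordinal.mk_Iio_ordinal, Cardinal.card_ord] at h1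
    have h2 := Cardinal.mk_range_le_lift.{u, u + 1} (f := f)
    rw [Cardinal.lift_id'.{u, u + 1}] at h2
    rw [hcard, hcofγ] at h2
    have h3 := h1.trans h2
    rw [Cardinal.lift_le] at h3
    exact absurd h3 (not_le.2 hμν)
  obtain ⟨i₀, hi₀, hstatA⟩ := main
  exact ⟨T i₀, {γ | (γ < (Cardinal.aleph (n : Ordinal)).ord ∧
      γ.cof = Cardinal.aleph (m : Ordinal)) ∧ ¬ IsStatIn (T i₀ ∩ Set.Iio γ) γ},
    (hT i₀ hi₀).1, (hT i₀ hi₀).2, fun γ hγ => hγ.1, hstatA, fun γ hγ => hγ.2⟩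

universe v w

lemma isStatIn_transfer {δa : Ordinal.{u}} {δb : Ordinal.{v}}
    (E : Ordinal.lift.{v} δa = Ordinal.lift.{u} δb)
    {S : Set Ordinal.{u}} (hS : IsStatIn S δa) :
    IsStatIn {y : Ordinal.{v} | y < δb ∧
      ∀ x : Ordinal.{u}, Ordinal.lift.{v} x = Ordinal.lift.{u} y → x ∈ S} δb := by
  intro C hC
  have hpex : ∀ x : Ordinal.{u}, ∃ y : Ordinal.{v}, x < δa →
      Ordinal.lift.{u} y = Ordinal.lift.{v} x ∧ y < δb := by
    intro x
    by_cases hx : x < δa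
    · have h1 : Ordinal.lift.{v} x ≤ Ordinal.lift.{u} δb := by
        rw [← E]; exact (Ordinal.lift_lt.2 hx).le
      obtain ⟨y, hy⟩ := Ordinal.mem_range_lift_of_le h1
      refine ⟨y, fun _ => ⟨hy, ?_⟩⟩
      have h2 : Ordinal.lift.{u} y < Ordinal.lift.{u} δb := by
        rw [hy, ← E]; exact Ordinal.lift_lt.2 hx
      exact Ordinal.lift_lt.1 h2
    · exact ⟨0, fun h => absurd h hx⟩
  choose p hp using hpex
  have hqex : ∀ y : Ordinal.{v}, ∃ x : Ordinal.{u}, y < δb →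
      Ordinal.lift.{v} x = Ordinal.lift.{u} y ∧ x < δa := by
    intro y
    by_cases hy : y < δb
    · have h1 : Ordinal.lift.{u} y ≤ Ordinal.lift.{v} δa := by
        rw [E]; exact (Ordinal.lift_lt.2 hy).le
      obtain ⟨x, hx⟩ := Ordinal.mem_range_lift_of_le h1
      refine ⟨x, fun _ => ⟨hx, ?_⟩⟩
      have h2 : Ordinal.lift.{v} x < Ordinal.lift.{v} δa := by
        rw [hx, E]; exact Ordinal.lift_lt.2 hy
      exact Ordinal.lift_lt.1 h2
    · exact ⟨0, fun h => absurd h hy⟩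
  choose q hq using hqex
  set C' := {x : Ordinal.{u} | x < δa ∧ p x ∈ C} with hC'def
  have hC'club : IsClubIn C' δa := by
    refine ⟨fun x hx => hx.1, ?_, ?_⟩
    · intro β hβ
      have hpβ := hp β hβ
      obtain ⟨c, hcC, hbc⟩ := hC.2.1 (p β) hpβ.2
      have hcδ : c < δb := hC.1 hcC
      have hqc := hq c hcδ
      refine ⟨q c, ⟨hqc.2, ?_⟩, ?_⟩
      · have hpq : p (q c) = c := Ordinal.lift_inj.1 ((hp (q c) hqc.2).1.trans hqc.1)
        rw [hpq]; exact hcC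
      · have h1 : Ordinal.lift.{v} β ≤ Ordinal.lift.{v} (q c) := by
          rw [hqc.1, ← hpβ.1]; exact Ordinal.lift_le.2 hbc
        exact Ordinal.lift_le.1 h1
    · intro α hα hα0 hlp
      have hpα := hp α hα
      refine ⟨hα, hC.2.2 (p α) hpα.2 ?_ ?_⟩
      · refine pos_iff_ne_zero.2 fun h0 => ?_
        have h1 := hpα.1
        rw [h0, Ordinal.lift_zero] at h1
        have h2 := Ordinal.lift_lt.2 hα0
        rw [Ordinal.lift_zero] at h2
        rw [← h1] at h2
        exact lt_irrefl _ h2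
      · intro β' hβ'
        have hβ'δ : β' < δb := hβ'.trans hpα.2
        have hqβ' := hq β' hβ'δ
        have hqβ'α : q β' < α := by
          have h1 : Ordinal.lift.{v} (q β') < Ordinal.lift.{v} α := by
            rw [hqβ'.1, ← hpα.1]; exact Ordinal.lift_lt.2 hβ'
          exact Ordinal.lift_lt.1 h1
        obtain ⟨c, hcC', h1, h2⟩ := hlp (q β') hqβ'α
        refine ⟨p c, hcC'.2, ?_, ?_⟩
        · have h3 : Ordinal.lift.{u} β' < Ordinal.lift.{u} (p c) := by
            rw [(hp c hcC'.1).1, ← hqβ'.1]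
            exact Ordinal.lift_lt.2 h1
          exact Ordinal.lift_lt.1 h3
        · have h4 : Ordinal.lift.{u} (p c) < Ordinal.lift.{u} (p α) := by
            rw [(hp c hcC'.1).1, hpα.1]
            exact Ordinal.lift_lt.2 h2
          exact Ordinal.lift_lt.1 h4
  obtain ⟨x, hxS, hxC'⟩ := hS C' hC'club
  refine ⟨p x, ⟨⟨(hp x hxC'.1).2, fun x' hx' => ?_⟩, hxC'.2⟩⟩
  have hxx : x' = x := Ordinal.lift_inj.1 (hx'.trans (hp x hxC'.1).1)
  exact hxx ▸ hxS

theorem stmt2_transfer (k m n : ℕ) (hkm : k < m) (hmn : m + 1 < n)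
    (T : Ordinal.{u} → Set Ordinal.{v})
    (hT : ∀ i < (Cardinal.aleph.{u} ((m : Ordinal) + 1)).ord,
      T i ⊆ {α | α < (Cardinal.aleph.{v} (n : Ordinal)).ord ∧
        Ordinal.cof α = Cardinal.aleph (k : Ordinal)} ∧
      IsStatIn (T i) (Cardinal.aleph.{v} (n : Ordinal)).ord)
    (hdisj : ∀ i < (Cardinal.aleph.{u} ((m : Ordinal) + 1)).ord,
      ∀ j < (Cardinal.aleph.{u} ((m : Ordinal) + 1)).ord,
      i ≠ j → T i ∩ T j = ∅) :
    ∃ S A : Set Ordinal.{w},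
      S ⊆ {α | α < (Cardinal.aleph.{w} (n : Ordinal)).ord ∧
        Ordinal.cof α = Cardinal.aleph (k : Ordinal)} ∧
      IsStatIn S (Cardinal.aleph.{w} (n : Ordinal)).ord ∧
      A ⊆ {α | α < (Cardinal.aleph.{w} (n : Ordinal)).ord ∧
        Ordinal.cof α = Cardinal.aleph (m : Ordinal)} ∧
      IsStatIn A (Cardinal.aleph.{w} (n : Ordinal)).ord ∧
      ∀ γ ∈ A, ¬ IsStatIn (S ∩ Set.Iio γ) γ := by
  -- index transfer w → u
  have E1 : Ordinal.lift.{w} ((Cardinal.aleph.{u} ((m : Ordinal) + 1)).ord) =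
      Ordinal.lift.{u} ((Cardinal.aleph.{w} ((m : Ordinal) + 1)).ord) := by
    rw [Cardinal.lift_ord, Cardinal.lift_ord, Cardinal.lift_aleph, Cardinal.lift_aleph,
      Ordinal.lift_add, Ordinal.lift_add, Ordinal.lift_one, Ordinal.lift_one,
      Ordinal.lift_natCast, Ordinal.lift_natCast]
  have E2 : Ordinal.lift.{w} ((Cardinal.aleph.{v} (n : Ordinal)).ord) =
      Ordinal.lift.{v} ((Cardinal.aleph.{w} (n : Ordinal)).ord) := by
    rw [Cardinal.lift_ord, Cardinal.lift_ord, Cardinal.lift_aleph, Cardinal.lift_aleph,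
      Ordinal.lift_natCast, Ordinal.lift_natCast]
  have hφex : ∀ j : Ordinal.{w}, ∃ i : Ordinal.{u},
      j < (Cardinal.aleph.{w} ((m : Ordinal) + 1)).ord →
      Ordinal.lift.{u} j = Ordinal.lift.{w} i := by
    intro j
    by_cases hj : j < (Cardinal.aleph.{w} ((m : Ordinal) + 1)).ord
    · have h1 : Ordinal.lift.{u} j ≤
          Ordinal.lift.{w} ((Cardinal.aleph.{u} ((m : Ordinal) + 1)).ord) := by
        rw [E1]; exact (Ordinal.lift_lt.2 hj).le
      obtain ⟨i, hi⟩ := Ordinal.mem_range_lift_of_le h1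
      exact ⟨i, fun _ => hi.symm⟩
    · exact ⟨0, fun h => absurd h hj⟩
  choose φ hφ using hφex
  have hφlt : ∀ j < (Cardinal.aleph.{w} ((m : Ordinal) + 1)).ord,
      φ j < (Cardinal.aleph.{u} ((m : Ordinal) + 1)).ord := by
    intro j hj
    have h2 : Ordinal.lift.{w} (φ j) <
        Ordinal.lift.{w} ((Cardinal.aleph.{u} ((m : Ordinal) + 1)).ord) := by
      rw [← hφ j hj, E1]
      exact Ordinal.lift_lt.2 hj
    exact Ordinal.lift_lt.1 h2
  -- transferred sets
  set T'' : Ordinal.{w} → Set Ordinal.{w} := fun j =>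
    {y : Ordinal.{w} | y < (Cardinal.aleph.{w} (n : Ordinal)).ord ∧
      ∀ x : Ordinal.{v}, Ordinal.lift.{w} x = Ordinal.lift.{v} y → x ∈ T (φ j)} with hT''def
  -- down-map for elements
  have hdown : ∀ y : Ordinal.{w}, y < (Cardinal.aleph.{w} (n : Ordinal)).ord →
      ∃ x : Ordinal.{v}, Ordinal.lift.{w} x = Ordinal.lift.{v} y ∧
        x < (Cardinal.aleph.{v} (n : Ordinal)).ord := by
    intro y hy
    have h1 : Ordinal.lift.{v} y ≤
        Ordinal.lift.{w} ((Cardinal.aleph.{v} (n : Ordinal)).ord) := by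
      rw [E2]; exact (Ordinal.lift_lt.2 hy).le
    obtain ⟨x, hx⟩ := Ordinal.mem_range_lift_of_le h1
    refine ⟨x, hx, ?_⟩
    have h2 : Ordinal.lift.{w} x <
        Ordinal.lift.{w} ((Cardinal.aleph.{v} (n : Ordinal)).ord) := by
      rw [hx, E2]; exact Ordinal.lift_lt.2 hy
    exact Ordinal.lift_lt.1 h2
  have hTsub : ∀ j < (Cardinal.aleph.{w} ((m : Ordinal) + 1)).ord,
      T'' j ⊆ {α | α < (Cardinal.aleph.{w} (n : Ordinal)).ord ∧
        Ordinal.cof α = Cardinal.aleph (k : Ordinal)} := by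
    intro j hj y hy
    refine ⟨hy.1, ?_⟩
    obtain ⟨x, hx1, hx2⟩ := hdown y hy.1
    have hxT : x ∈ T (φ j) := hy.2 x hx1
    have hcofx : Ordinal.cof x = Cardinal.aleph (k : Ordinal) :=
      ((hT (φ j) (hφlt j hj)).1 hxT).2
    have h3 : Cardinal.lift.{w} (Ordinal.cof x) = Cardinal.lift.{v} (Ordinal.cof y) := by
      rw [Ordinal.lift_cof, Ordinal.lift_cof, hx1]
    rw [hcofx, Cardinal.lift_aleph, Ordinal.lift_natCast] at h3
    have h4 : Cardinal.lift.{v} (Cardinal.aleph.{w} (k : Ordinal)) =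
        Cardinal.lift.{v} (Ordinal.cof y) := by
      rw [Cardinal.lift_aleph, Ordinal.lift_natCast, ← h3]
    exact (Cardinal.lift_inj.1 h4).symm
  have hTstat : ∀ j < (Cardinal.aleph.{w} ((m : Ordinal) + 1)).ord,
      IsStatIn (T'' j) (Cardinal.aleph.{w} (n : Ordinal)).ord :=
    fun j hj => isStatIn_transfer E2 (hT (φ j) (hφlt j hj)).2
  have hTdisj : ∀ i < (Cardinal.aleph.{w} ((m : Ordinal) + 1)).ord,
      ∀ j < (Cardinal.aleph.{w} ((m : Ordinal) + 1)).ord,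
      i ≠ j → T'' i ∩ T'' j = ∅ := by
    intro i hi j hj hne
    refine Set.eq_empty_iff_forall_notMem.2 fun y hy => ?_
    obtain ⟨x, hx1, hx2⟩ := hdown y hy.1.1
    have hφne : φ i ≠ φ j := by
      intro h
      exact hne (Ordinal.lift_inj.1 (by rw [hφ i hi, h, ← hφ j hj]))
    have hd := hdisj (φ i) (hφlt i hi) (φ j) (hφlt j hj) hφne
    have hmem : x ∈ T (φ i) ∩ T (φ j) := ⟨hy.1.2 x hx1, hy.2.2 x hx1⟩
    rw [hd] at hmem
    exact hmem
  exact stmt2_core k m n hkm hmn T''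
    (fun j hj => ⟨hTsub j hj, hTstat j hj⟩) hTdisj

/-- For `k < m < n - 1`, assuming `{α < ω_n : cf α = ω_k}` contains
`ω_{m+1}`-many pairwise disjoint stationary subsets, there are stationary sets
`S ⊆ {α < ω_n : cf α = ω_k}` and `A ⊆ {α < ω_n : cf α = ω_m}` such that
`S ∩ γ` is nonstationary in `γ` for every `γ ∈ A`. -/
theorem stmt2 (k m n : ℕ) (hkm : k < m) (hmn : m + 1 < n)
    (T : Ordinal → Set Ordinal)
    (hT : ∀ i < (Cardinal.aleph (m + 1)).ord,
      T i ⊆ {α | α < (Cardinal.aleph n).ord ∧ Ordinal.cof α = Cardinal.aleph k} ∧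
      IsStatIn (T i) (Cardinal.aleph n).ord)
    (hdisj : ∀ i < (Cardinal.aleph (m + 1)).ord, ∀ j < (Cardinal.aleph (m + 1)).ord,
      i ≠ j → T i ∩ T j = ∅) :
    ∃ S A : Set Ordinal,
      S ⊆ {α | α < (Cardinal.aleph n).ord ∧ Ordinal.cof α = Cardinal.aleph k} ∧
      IsStatIn S (Cardinal.aleph n).ord ∧
      A ⊆ {α | α < (Cardinal.aleph n).ord ∧ Ordinal.cof α = Cardinal.aleph m} ∧
      IsStatIn A (Cardinal.aleph n).ord ∧
      ∀ γ ∈ A, ¬ IsStatIn (S ∩ Set.Iio γ) γ :=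
  stmt2_transfer k m n hkm hmn T hT hdisj
end

section
/- Assume GCH (or just that a ◊-sequence exists on S³₁ = {γ < ω₃ : cf γ = ω₁}). Then there exists a stationary set A ⊆ S³₁ such that for every S ⊆ S³₀ = {α < ω₃ : cf α = ω}, the symmetric difference A Δ (Tr(S) ∩ S³₁) is stationary, where Tr(S) = {γ < ω₃ : S ∩ γ is stationary in γ}. -/
section Stmt5Aux

universe a b

private lemma liftTheta : Ordinal.lift.{b} (Cardinal.aleph 3).ord = (Cardinal.aleph 3).ord := by
  rw [Cardinal.lift_ord, Cardinal.lift_aleph, Ordinal.lift_ofNat]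

private lemma liftCofAleph1 {γ : Ordinal.{a}} :
    Ordinal.cof (Ordinal.lift.{b} γ) = Cardinal.aleph 1 ↔ Ordinal.cof γ = Cardinal.aleph 1 := by
  rw [← Ordinal.lift_cof]
  constructor
  · intro h
    have h2 : Cardinal.lift.{b} (Ordinal.cof γ) = Cardinal.lift.{b} (Cardinal.aleph 1) := by
      rw [h, Cardinal.lift_aleph, Ordinal.lift_one]
    exact Cardinal.lift_inj.1 h2
  · intro h
    rw [h, Cardinal.lift_aleph, Ordinal.lift_one]


private lemma clubIn_image {C : Set Ordinal.{a}} {θ : Ordinal.{a}} (h : IsClubIn C θ) :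
    IsClubIn (Ordinal.lift.{b} '' C) (Ordinal.lift.{b} θ) := by
  obtain ⟨hsub, hunb, hcl⟩ := h
  refine ⟨?_, ?_, ?_⟩
  · rintro x ⟨c, hc, rfl⟩
    exact Ordinal.lift_lt.2 (hsub hc)
  · intro β hβ
    obtain ⟨β', rfl⟩ := Ordinal.mem_range_lift_of_le hβ.le
    obtain ⟨α, hα, hβα⟩ := hunb β' (Ordinal.lift_lt.1 hβ)
    exact ⟨_, ⟨α, hα, rfl⟩, Ordinal.lift_le.2 hβα⟩
  · intro α hα h0 hacc
    obtain ⟨α', rfl⟩ := Ordinal.mem_range_lift_of_le hα.le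
    refine ⟨α', hcl α' (Ordinal.lift_lt.1 hα) ?_ ?_, rfl⟩
    · have h00 : (0 : Ordinal.{max a b}) = Ordinal.lift.{b} 0 := by
        rw [Ordinal.lift_zero]
      rw [h00] at h0
      exact Ordinal.lift_lt.1 h0
    · intro β hβ
      obtain ⟨c', hc', hβc, hcα⟩ := hacc (Ordinal.lift.{b} β) (Ordinal.lift_lt.2 hβ)
      obtain ⟨c, hc, rfl⟩ := hc'
      exact ⟨c, hc, Ordinal.lift_lt.1 hβc, Ordinal.lift_lt.1 hcα⟩

private lemma clubIn_preimage {C' : Set Ordinal.{max a b}} {θ : Ordinal.{a}}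
    (h : IsClubIn C' (Ordinal.lift.{b} θ)) : IsClubIn (Ordinal.lift.{b} ⁻¹' C') θ := by
  obtain ⟨hsub, hunb, hcl⟩ := h
  refine ⟨fun c hc => Ordinal.lift_lt.1 (hsub hc), ?_, ?_⟩
  · intro β hβ
    obtain ⟨α, hα, hβα⟩ := hunb (Ordinal.lift.{b} β) (Ordinal.lift_lt.2 hβ)
    obtain ⟨α', rfl⟩ := Ordinal.mem_range_lift_of_le (le_of_lt (hsub hα))
    exact ⟨α', hα, Ordinal.lift_le.1 hβα⟩
  · intro α hα h0 hacc
    refine hcl (Ordinal.lift.{b} α) (Ordinal.lift_lt.2 hα) ?_ ?_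
    · rw [← Ordinal.lift_zero.{a,b}]
      exact Ordinal.lift_lt.2 h0
    · intro β' hβ'
      obtain ⟨β, rfl⟩ := Ordinal.mem_range_lift_of_le hβ'.le
      obtain ⟨c, hc, hβc, hcα⟩ := hacc β (Ordinal.lift_lt.1 hβ')
      exact ⟨Ordinal.lift.{b} c, hc, Ordinal.lift_lt.2 hβc, Ordinal.lift_lt.2 hcα⟩

private lemma statIn_image {S : Set Ordinal.{a}} {θ : Ordinal.{a}} (h : IsStatIn S θ) :
    IsStatIn (Ordinal.lift.{b} '' S) (Ordinal.lift.{b} θ) := by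
  intro C' hC'
  obtain ⟨c, hcS, hcC⟩ := h _ (clubIn_preimage hC')
  exact ⟨_, ⟨c, hcS, rfl⟩, hcC⟩

private lemma statIn_preimage {S' : Set Ordinal.{max a b}} {θ : Ordinal.{a}}
    (h : IsStatIn S' (Ordinal.lift.{b} θ)) : IsStatIn (Ordinal.lift.{b} ⁻¹' S') θ := by
  intro C hC
  obtain ⟨z, hzS, hzC⟩ := h _ (clubIn_image hC)
  obtain ⟨c, hc, rfl⟩ := hzC
  exact ⟨c, hzS, hc⟩

private lemma statIn_lift_iff {S : Set Ordinal.{a}} {θ : Ordinal.{a}} :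
    IsStatIn (Ordinal.lift.{b} '' S) (Ordinal.lift.{b} θ) ↔ IsStatIn S θ := by
  constructor
  · intro h
    have h2 := statIn_preimage h
    rwa [Set.preimage_image_eq _ (fun u v huv => Ordinal.lift_inj.1 huv)] at h2
  · exact statIn_image

end Stmt5Aux

theorem stmt5_aux
    (D : Ordinal.{a} → Set Ordinal.{a})
    (hDsub : ∀ γ, D γ ⊆ Set.Iio γ)
    (hdiamond : ∀ S : Set Ordinal.{a},
      IsStatIn {γ | γ < (Cardinal.aleph 3).ord ∧ Ordinal.cof γ = Cardinal.aleph 1 ∧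
        S ∩ Set.Iio γ = D γ} (Cardinal.aleph 3).ord) :
    ∃ A : Set Ordinal.{b},
      A ⊆ {γ | γ < (Cardinal.aleph 3).ord ∧ Ordinal.cof γ = Cardinal.aleph 1} ∧
      IsStatIn A (Cardinal.aleph 3).ord ∧
      ∀ S : Set Ordinal.{b},
        S ⊆ {α | α < (Cardinal.aleph 3).ord ∧ Ordinal.cof α = Cardinal.aleph0} →
        IsStatIn (symmDiff A
          ({γ | γ < (Cardinal.aleph 3).ord ∧ IsStatIn (S ∩ Set.Iio γ) γ} ∩
            {γ | γ < (Cardinal.aleph 3).ord ∧ Ordinal.cof γ = Cardinal.aleph 1}))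
          (Cardinal.aleph 3).ord := by
  have hθ1 : Ordinal.lift.{b} (Cardinal.aleph 3).ord = (Cardinal.aleph 3).ord := liftTheta
  have hθ2 : Ordinal.lift.{a} (Cardinal.aleph 3).ord = (Cardinal.aleph 3).ord := liftTheta
  set A1 : Set Ordinal.{a} := {γ | γ < (Cardinal.aleph 3).ord ∧
    Ordinal.cof γ = Cardinal.aleph 1 ∧ ¬ IsStatIn (D γ) γ} with hA1def
  refine ⟨Ordinal.lift.{a} ⁻¹' (Ordinal.lift.{b} '' A1), ?_, ?_, ?_⟩
  · rintro γ ⟨γ1, hγ1A, hEq⟩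
    refine ⟨?_, ?_⟩
    · have hlt : Ordinal.lift.{a} γ < Ordinal.lift.{a} (Cardinal.aleph 3).ord := by
        rw [hθ2, ← hθ1, ← hEq]
        exact Ordinal.lift_lt.2 hγ1A.1
      exact Ordinal.lift_lt.1 hlt
    · refine liftCofAleph1.1 ?_
      rw [← hEq]
      exact liftCofAleph1.2 hγ1A.2.1
  · have hA1stat : IsStatIn A1 (Cardinal.aleph 3).ord := by
      intro C hC
      obtain ⟨γ, hγ, hγC⟩ := hdiamond ∅ C hC
      refine ⟨γ, ⟨hγ.1, hγ.2.1, ?_⟩, hγC⟩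
      intro hstat
      obtain ⟨z, hz⟩ := hstat (Set.Iio γ)
        ⟨fun u hu => hu, fun β hβ => ⟨β, hβ, le_refl β⟩, fun α hα _ _ => hα⟩
      rw [← hγ.2.2] at hz
      exact hz.1.1
    have hup := statIn_image.{a, b} hA1stat
    rw [hθ1, ← hθ2] at hup
    exact statIn_preimage hup
  · intro S hS C hC
    have hCmax : IsClubIn (Ordinal.lift.{a} '' C) (Ordinal.lift.{b} (Cardinal.aleph 3).ord) := by
      rw [hθ1, ← hθ2]
      exact clubIn_image hC
    obtain ⟨γ1, hγ1, hγ1C⟩ :=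
      hdiamond (Ordinal.lift.{b} ⁻¹' (Ordinal.lift.{a} '' S)) _ (clubIn_preimage hCmax)
    obtain ⟨γ, hγC, hEq⟩ := hγ1C
    refine ⟨γ, ?_, hγC⟩
    have hγlt : γ < (Cardinal.aleph 3).ord := by
      have hlt : Ordinal.lift.{a} γ < Ordinal.lift.{a} (Cardinal.aleph 3).ord := by
        rw [hEq, hθ2, ← hθ1]
        exact Ordinal.lift_lt.2 hγ1.1
      exact Ordinal.lift_lt.1 hlt
    have hγcof : Ordinal.cof γ = Cardinal.aleph 1 := by
      refine liftCofAleph1.1 ?_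
      rw [hEq]
      exact liftCofAleph1.2 hγ1.2.1
    have himg : Ordinal.lift.{a} '' (S ∩ Set.Iio γ)
        = Ordinal.lift.{b} '' ((Ordinal.lift.{b} ⁻¹' (Ordinal.lift.{a} '' S)) ∩ Set.Iio γ1) := by
      ext z
      constructor
      · rintro ⟨s, ⟨hsS, hsγ⟩, rfl⟩
        have hz : Ordinal.lift.{a} s < Ordinal.lift.{b} γ1 := by
          rw [← hEq]
          exact Ordinal.lift_lt.2 hsγ
        obtain ⟨s1, hs1⟩ := Ordinal.mem_range_lift_of_le hz.le
        refine ⟨s1, ⟨?_, ?_⟩, hs1⟩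
        · rw [Set.mem_preimage, hs1]
          exact ⟨s, hsS, rfl⟩
        · have hlt2 : Ordinal.lift.{b} s1 < Ordinal.lift.{b} γ1 := by
            rw [hs1]
            exact hz
          exact Ordinal.lift_lt.1 hlt2
      · rintro ⟨s1, ⟨hs1S, hs1γ⟩, rfl⟩
        obtain ⟨s, hsS, hs⟩ := hs1S
        refine ⟨s, ⟨hsS, ?_⟩, hs⟩
        have hlt : Ordinal.lift.{a} s < Ordinal.lift.{a} γ := by
          rw [hs, hEq]
          exact Ordinal.lift_lt.2 hs1γ
        exact Ordinal.lift_lt.1 hlt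
    have hkey : IsStatIn (S ∩ Set.Iio γ) γ ↔ IsStatIn (D γ1) γ1 := by
      rw [← statIn_lift_iff (S := S ∩ Set.Iio γ) (θ := γ), himg, hEq, statIn_lift_iff, hγ1.2.2]
    have hAiff : (γ ∈ Ordinal.lift.{a} ⁻¹' (Ordinal.lift.{b} '' A1)) ↔ ¬ IsStatIn (D γ1) γ1 := by
      constructor
      · rintro ⟨γ1', hγ1', hEq'⟩
        have hee : γ1' = γ1 := by
          refine Ordinal.lift_inj.1 ?_
          rw [hEq', hEq]
        exact hee ▸ hγ1'.2.2
      · intro h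
        exact ⟨γ1, ⟨hγ1.1, hγ1.2.1, h⟩, hEq.symm⟩
    rw [Set.mem_symmDiff]
    by_cases h : IsStatIn (D γ1) γ1
    · exact Or.inr ⟨⟨⟨hγlt, hkey.2 h⟩, ⟨hγlt, hγcof⟩⟩, fun hA => (hAiff.1 hA) h⟩
    · exact Or.inl ⟨hAiff.2 h, fun hT => h (hkey.1 hT.1.2)⟩

/-- Given a `◊`-sequence on `S³₁ = {γ < ω₃ : cf γ = ω₁}`, there is a
stationary `A ⊆ S³₁` such that for every `S ⊆ S³₀`, the symmetric difference
`A Δ (Tr(S) ∩ S³₁)` is stationary, where `Tr(S) = {γ < ω₃ : S ∩ γ stationary in γ}`. -/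
theorem stmt5
    (D : Ordinal → Set Ordinal)
    (hDsub : ∀ γ, D γ ⊆ Set.Iio γ)
    (hdiamond : ∀ S : Set Ordinal,
      IsStatIn {γ | γ < (Cardinal.aleph 3).ord ∧ Ordinal.cof γ = Cardinal.aleph 1 ∧
        S ∩ Set.Iio γ = D γ} (Cardinal.aleph 3).ord) :
    ∃ A : Set Ordinal,
      A ⊆ {γ | γ < (Cardinal.aleph 3).ord ∧ Ordinal.cof γ = Cardinal.aleph 1} ∧
      IsStatIn A (Cardinal.aleph 3).ord ∧
      ∀ S : Set Ordinal,
        S ⊆ {α | α < (Cardinal.aleph 3).ord ∧ Ordinal.cof α = Cardinal.aleph0} →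
        IsStatIn (symmDiff A
          ({γ | γ < (Cardinal.aleph 3).ord ∧ IsStatIn (S ∩ Set.Iio γ) γ} ∩
            {γ | γ < (Cardinal.aleph 3).ord ∧ Ordinal.cof γ = Cardinal.aleph 1}))
          (Cardinal.aleph 3).ord := by
  exact stmt5_aux D hDsub hdiamond
end

section
/- Suppose A ⊆ {γ < ω₃ : cf γ = ω₁} is stationary with a square sequence ⟨C_γ : γ ∈ A⟩ (each C_γ club in γ of order type ω₁, coherent: α ∈ C_{γ₁} ∩ C_{γ₂} implies C_{γ₁} ∩ α = C_{γ₂} ∩ α). Then there exist stationary sets S_i ⊆ {α < ω₃ : cf α < ω₁} for i < ω₁ such that Tr(S_i) ∩ A = ∅ for each i, but A ⊆ Tr(⋃_{i<ω₁} S_i). -/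
/-- The trace of `S` (below `ω₃`): points of uncountable cofinality at which `S`
reflects. -/
def Tr3 (S : Set Ordinal) : Set Ordinal :=
  {γ | γ < (Cardinal.aleph 3).ord ∧ Cardinal.aleph0 < Ordinal.cof γ ∧
    IsStatIn (S ∩ Set.Iio γ) γ}

universe u v

open Ordinal Cardinal Set

/-- Lift to the next universe. -/
def liftO (i : Ordinal.{u}) : Ordinal.{u + 1} := Ordinal.lift.{u + 1, u} i

lemma liftO_omega1 : liftO.{u} (Cardinal.aleph 1).ord = (Cardinal.aleph 1).ord := by
  rw [liftO, lift_ord, Cardinal.lift_aleph, Ordinal.lift_one]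

lemma lt_liftO_iff {a : Ordinal.{u}} {b : Ordinal.{u + 1}} :
    b < liftO a ↔ ∃ c < a, liftO c = b :=
  Ordinal.lt_lift_iff

lemma lift_omega1_eq.{u1, u2} :
    Ordinal.lift.{u1, u2} ((Cardinal.aleph 1).ord : Ordinal.{u2}) =
      Ordinal.lift.{u2, u1} ((Cardinal.aleph 1).ord : Ordinal.{u1}) := by
  rw [Cardinal.lift_ord, Cardinal.lift_ord, Cardinal.lift_aleph, Cardinal.lift_aleph,
    Ordinal.lift_one, Ordinal.lift_one]

/-- Transfer an ordinal below `ω₁` to another universe. -/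
noncomputable def trf.{u1, u2} (i : Ordinal.{u2}) : Ordinal.{u1} :=
  if h : Ordinal.lift.{u1, u2} i <
      Ordinal.lift.{u2, u1} ((Cardinal.aleph 1).ord : Ordinal.{u1}) then
    (Ordinal.lt_lift_iff.1 h).choose
  else 0

lemma trf_spec.{u1, u2} {i : Ordinal.{u2}} (hi : i < (Cardinal.aleph 1).ord) :
    trf.{u1, u2} i < (Cardinal.aleph 1).ord ∧
      Ordinal.lift.{u2, u1} (trf.{u1, u2} i) = Ordinal.lift.{u1, u2} i := by
  have h : Ordinal.lift.{u1, u2} i <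
      Ordinal.lift.{u2, u1} ((Cardinal.aleph 1).ord : Ordinal.{u1}) := by
    rw [← lift_omega1_eq]
    exact Ordinal.lift_lt.2 hi
  obtain ⟨h1, h2⟩ := (Ordinal.lt_lift_iff.1 h).choose_spec
  rw [trf, dif_pos h]
  exact ⟨h1, h2⟩

lemma trf_surj.{u1, u2} {ξ : Ordinal.{u1}} (hξ : ξ < (Cardinal.aleph 1).ord) :
    ∃ i : Ordinal.{u2}, i < (Cardinal.aleph 1).ord ∧ trf.{u1, u2} i = ξ := by
  have h : Ordinal.lift.{u2, u1} ξ <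
      Ordinal.lift.{u1, u2} ((Cardinal.aleph 1).ord : Ordinal.{u2}) := by
    rw [lift_omega1_eq]
    exact Ordinal.lift_lt.2 hξ
  obtain ⟨i, hi, hlift⟩ := Ordinal.lt_lift_iff.1 h
  obtain ⟨ht, heq⟩ := trf_spec.{u1, u2} hi
  exact ⟨i, hi, Ordinal.lift_inj.1 (heq.trans hlift)⟩

/-- One common "limit point" below `γ` for a small family of unbounded subsets of `γ`. -/
lemma famLimit {γ : Ordinal.{u}} (hγ : ℵ₀ < γ.cof)
    {ι : Type u} (hι : #ι < γ.cof)
    (D : ι → Set Ordinal.{u})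
    (hD : ∀ i, ∀ x < γ, ∃ c ∈ D i, x < c ∧ c < γ)
    {β : Ordinal.{u}} (hβ : β < γ) :
    ∃ α, β ≤ α ∧ α < γ ∧ 0 < α ∧ ∀ i, ∀ b < α, ∃ c ∈ D i, b < c ∧ c < α := by
  classical
  have hlim : Order.IsSuccLimit γ := Ordinal.aleph0_le_cof.1 hγ.le
  have step : ∀ x, x < γ → ∃ y, x < y ∧ y < γ ∧ ∀ i, ∃ c ∈ D i, x < c ∧ c ≤ y := by
    intro x hx
    choose c hc1 hc2 hc3 using fun i => hD i x hx
    refine ⟨max (Order.succ x) (iSup c), ?_, ?_, fun i => ?_⟩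
    · exact lt_of_lt_of_le (Order.lt_succ x) (le_max_left _ _)
    · exact max_lt (hlim.succ_lt hx) (Ordinal.iSup_lt_ord hι hc3)
    · exact ⟨c i, hc1 i, hc2 i, le_trans (Ordinal.le_iSup c i) (le_max_right _ _)⟩
  have F : ∀ x : Ordinal.{u},
      ∃ y, x < γ → (x < y ∧ y < γ ∧ ∀ i, ∃ c ∈ D i, x < c ∧ c ≤ y) := by
    intro x
    by_cases hx : x < γ
    · obtain ⟨y, h⟩ := step x hx; exact ⟨y, fun _ => h⟩
    · exact ⟨0, fun h => absurd h hx⟩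
  choose f hf using F
  set g : ℕ → Ordinal.{u} := fun n => Nat.rec β (fun _ ih => f ih) n with hg
  have hglt : ∀ n, g n < γ := by
    intro n
    induction n with
    | zero => exact hβ
    | succ n ih => exact ((hf (g n)) ih).2.1
  have hgmono : ∀ n, g n < g (n + 1) := fun n => ((hf (g n)) (hglt n)).1
  set α := iSup g with hα
  have hcard : Cardinal.lift.{u, 0} #ℕ < γ.cof := by
    rwa [Cardinal.mk_denumerable, Cardinal.lift_aleph0]
  have hαγ : α < γ := Ordinal.iSup_lt_ord_lift hcard hglt
  have hle : ∀ n, g n ≤ α := fun n => Ordinal.le_iSup g n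
  have hlt : ∀ n, g n < α := fun n => (hgmono n).trans_le (hle (n + 1))
  refine ⟨α, hle 0, hαγ, (zero_le : 0 ≤ g 0).trans_lt (hlt 0), ?_⟩
  intro i b hb
  obtain ⟨n, hn⟩ := Ordinal.lt_iSup_iff.1 hb
  obtain ⟨c, hc, h1, h2⟩ := ((hf (g n)) (hglt n)).2.2 i
  exact ⟨c, hc, hn.trans h1, h2.trans_lt (hlt (n + 1))⟩

lemma clubIn_iInter {γ : Ordinal.{u}} (hγ : ℵ₀ < γ.cof) {ι : Type u} [Nonempty ι]
    (hι : #ι < γ.cof) {D : ι → Set Ordinal.{u}} (h : ∀ i, IsClubIn (D i) γ) :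
    IsClubIn (⋂ i, D i) γ := by
  have hlim : Order.IsSuccLimit γ := Ordinal.aleph0_le_cof.1 hγ.le
  have hD : ∀ i, ∀ x < γ, ∃ c ∈ D i, x < c ∧ c < γ := by
    intro i x hx
    obtain ⟨c, hc, hxc⟩ := (h i).2.1 (Order.succ x) (hlim.succ_lt hx)
    exact ⟨c, hc, (Order.lt_succ x).trans_le hxc, (h i).1 hc⟩
  refine ⟨fun x hx => (h (Classical.arbitrary ι)).1 (Set.mem_iInter.1 hx _), ?_, ?_⟩
  · intro b hb
    obtain ⟨α, hβα, hαγ, h0, hlp⟩ := famLimit hγ hι D hD hb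
    exact ⟨α, Set.mem_iInter.2 fun i => (h i).2.2 α hαγ h0 (hlp i), hβα⟩
  · intro α hαγ h0 hlp
    refine Set.mem_iInter.2 fun i => (h i).2.2 α hαγ h0 ?_
    intro b hb
    obtain ⟨c, hc, h1, h2⟩ := hlp b hb
    exact ⟨c, Set.mem_iInter.1 hc i, h1, h2⟩

/-- The set of limit points of `D` below `γ`. -/
def limPts (D : Set Ordinal.{u}) (γ : Ordinal.{u}) : Set Ordinal.{u} :=
  {α | α < γ ∧ 0 < α ∧ ∀ b < α, ∃ c ∈ D, b < c ∧ c < α}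

lemma limPts_club {γ : Ordinal.{u}} (hγ : ℵ₀ < γ.cof) {D : Set Ordinal.{u}}
    (h : IsClubIn D γ) : IsClubIn (limPts D γ) γ ∧ limPts D γ ⊆ D := by
  have hlim : Order.IsSuccLimit γ := Ordinal.aleph0_le_cof.1 hγ.le
  have hsub : limPts D γ ⊆ D := fun α hα => h.2.2 α hα.1 hα.2.1 hα.2.2
  have hD : ∀ _ : PUnit.{u + 1}, ∀ x < γ, ∃ c ∈ D, x < c ∧ c < γ := by
    intro _ x hx
    obtain ⟨c, hc, hxc⟩ := h.2.1 (Order.succ x) (hlim.succ_lt hx)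
    exact ⟨c, hc, (Order.lt_succ x).trans_le hxc, h.1 hc⟩
  have hιcard : #PUnit.{u + 1} < γ.cof := by
    rw [Cardinal.mk_punit]
    exact Cardinal.one_lt_aleph0.trans hγ
  refine ⟨⟨fun α hα => hα.1, ?_, ?_⟩, hsub⟩
  · intro b hb
    obtain ⟨α, h1, h2, h3, h4⟩ := famLimit hγ hιcard (fun _ => D) hD hb
    exact ⟨α, ⟨h2, h3, h4 PUnit.unit⟩, h1⟩
  · intro α hαγ h0 hlp
    refine ⟨hαγ, h0, fun b hb => ?_⟩
    obtain ⟨c, hc, h1, h2⟩ := hlp b hb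
    exact ⟨c, hsub hc, h1, h2⟩

lemma otp_lt_of_mem {s : Set Ordinal.{u}} {α : Ordinal.{u}} (h : α ∈ s) :
    otp (s ∩ Set.Iio α) < otp s := by
  have e : otp (s ∩ Set.Iio α) = Ordinal.typein ((· < ·) : s → s → Prop) ⟨α, h⟩ := by
    rw [← Ordinal.type_subrel]
    refine Ordinal.type_eq.2 ⟨?_⟩
    exact ⟨⟨fun x => ⟨⟨x.1, x.2.1⟩, x.2.2⟩, fun y => ⟨y.1.1, y.1.2, y.2⟩,
      fun x => rfl, fun y => rfl⟩, Iff.rfl⟩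
  rw [e]
  exact Ordinal.typein_lt_type _ _

lemma otp_inj {s : Set Ordinal.{u}} {x y : Ordinal.{u}} (hx : x ∈ s) (hy : y ∈ s)
    (h : otp (s ∩ Set.Iio x) = otp (s ∩ Set.Iio y)) : x = y := by
  have key : ∀ {a b : Ordinal.{u}}, a ∈ s → b ∈ s → a < b →
      otp (s ∩ Set.Iio a) ≠ otp (s ∩ Set.Iio b) := by
    intro a b ha hb hab heq
    have ha' : a ∈ s ∩ Set.Iio b := ⟨ha, hab⟩
    have hlt := otp_lt_of_mem (s := s ∩ Set.Iio b) ha'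
    have he : (s ∩ Set.Iio b) ∩ Set.Iio a = s ∩ Set.Iio a := by
      ext z
      simp only [Set.mem_inter_iff, Set.mem_Iio]
      exact ⟨fun h => ⟨h.1.1, h.2⟩, fun h => ⟨⟨h.1, h.2.trans hab⟩, h.2⟩⟩
    rw [he, heq] at hlt
    exact lt_irrefl _ hlt
  rcases lt_trichotomy x y with hxy | hxy | hxy
  · exact absurd h (key hx hy hxy)
  · exact hxy
  · exact absurd h.symm (key hy hx hxy)

lemma cof_lt_aleph1 {α : Ordinal.{u}} {s : Set Ordinal.{u}}
    (hsub : s ⊆ Set.Iio α) (hub : ∀ b < α, ∃ c ∈ s, b < c) (h0 : 0 < α)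
    (hcard : otp s < (Cardinal.aleph 1).ord) :
    α.cof < Cardinal.aleph 1 := by
  have hcnt : s.Countable := by
    rw [Cardinal.countable_iff_lt_aleph_one]
    have h1 : (otp s).card < Cardinal.aleph 1 := Cardinal.lt_ord.1 hcard
    rwa [show (otp s).card = #s from Ordinal.card_type _] at h1
  have hne : s.Nonempty := by
    obtain ⟨c, hc, _⟩ := hub 0 h0
    exact ⟨c, hc⟩
  obtain ⟨f, hf⟩ := hcnt.exists_eq_range hne
  have hflt : ∀ n, f n < α := fun n => hsub (hf ▸ Set.mem_range_self n)
  have hsup : iSup f = α := by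
    apply le_antisymm
    · exact Ordinal.iSup_le fun n => (hflt n).le
    · apply le_of_forall_lt
      intro b hb
      obtain ⟨c, hc, hbc⟩ := hub b hb
      rw [hf] at hc
      obtain ⟨n, rfl⟩ := hc
      exact hbc.trans_le (Ordinal.le_iSup f n)
  have hcof : α.cof ≤ ℵ₀ := by
    have h := Ordinal.cof_iSup_le_lift (f := f) (fun n => by rw [hsup]; exact hflt n)
    rwa [hsup, Cardinal.mk_denumerable, Cardinal.lift_aleph0] at h
  exact hcof.trans_lt Cardinal.aleph0_lt_aleph_one

/-- The `ξ`-th level of the decomposition of `⋃ γ ∈ A, C γ` (restricted to limit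
points of the clubs). -/
def S0 (A : Set Ordinal.{u}) (C : Ordinal.{u} → Set Ordinal.{u}) (ξ : Ordinal.{u + 1}) :
    Set Ordinal.{u} :=
  {α | ∃ γ ∈ A, α ∈ C γ ∧ (∀ b < α, ∃ c ∈ C γ, b < c ∧ c < α) ∧
    otp (C γ ∩ Set.Iio α) = ξ}

section Main

variable {A : Set Ordinal.{u}} {C : Ordinal.{u} → Set Ordinal.{u}}

lemma S0_key (hcoh : ∀ γ₁ ∈ A, ∀ γ₂ ∈ A, ∀ α, α ∈ C γ₁ ∩ C γ₂ →
      C γ₁ ∩ Set.Iio α = C γ₂ ∩ Set.Iio α)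
    {γ : Ordinal.{u}} (hγ : γ ∈ A) {ξ : Ordinal.{u + 1}} {α : Ordinal.{u}}
    (hα : α ∈ S0 A C ξ) (hαC : α ∈ C γ) :
    otp (C γ ∩ Set.Iio α) = ξ := by
  obtain ⟨γ', hγ', hmem, _, hξ⟩ := hα
  rw [← hξ, hcoh γ' hγ' γ hγ α ⟨hmem, hαC⟩]

lemma S0_unique (hcoh : ∀ γ₁ ∈ A, ∀ γ₂ ∈ A, ∀ α, α ∈ C γ₁ ∩ C γ₂ →
      C γ₁ ∩ Set.Iio α = C γ₂ ∩ Set.Iio α)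
    {γ : Ordinal.{u}} (hγ : γ ∈ A) {ξ : Ordinal.{u + 1}} {x y : Ordinal.{u}}
    (hx : x ∈ S0 A C ξ) (hy : y ∈ S0 A C ξ) (hxC : x ∈ C γ) (hyC : y ∈ C γ) :
    x = y :=
  otp_inj hxC hyC (by rw [S0_key hcoh hγ hx hxC, S0_key hcoh hγ hy hyC])

end Main

theorem stmt8_aux.{u1, u2}
    (A : Set Ordinal.{u1})
    (hA : A ⊆ {γ | γ < (Cardinal.aleph 3).ord ∧ Ordinal.cof γ = Cardinal.aleph 1})
    (hAstat : IsStatIn A (Cardinal.aleph 3).ord)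
    (C : Ordinal.{u1} → Set Ordinal.{u1})
    (hclub : ∀ γ ∈ A, IsClubIn (C γ) γ)
    (hotp : ∀ γ ∈ A, otp (C γ) = (Cardinal.aleph 1).ord)
    (hcoh : ∀ γ₁ ∈ A, ∀ γ₂ ∈ A, ∀ α, α ∈ C γ₁ ∩ C γ₂ →
      C γ₁ ∩ Set.Iio α = C γ₂ ∩ Set.Iio α) :
    ∃ S : Ordinal.{u2} → Set Ordinal.{u1},
      (∀ i < (Cardinal.aleph 1).ord,
        S i ⊆ {α | α < (Cardinal.aleph 3).ord ∧ Ordinal.cof α < Cardinal.aleph 1} ∧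
        IsStatIn (S i) (Cardinal.aleph 3).ord ∧
        Tr3 (S i) ∩ A = ∅) ∧
      A ⊆ Tr3 (⋃ i ∈ Set.Iio (Cardinal.aleph 1).ord, S i) := by
  classical
  -- basic cardinal facts
  have hreg3 : (Cardinal.aleph 3).IsRegular := by
    have h32 : (3 : Ordinal) = Order.succ 2 := by
      rw [← Ordinal.add_one_eq_succ]; norm_num
    rw [h32]
    exact Cardinal.isRegular_aleph_succ 2
  have hcof3 : ((Cardinal.aleph 3).ord).cof = Cardinal.aleph 3 := hreg3.cof_eq
  have h03 : ℵ₀ < ((Cardinal.aleph 3).ord).cof := by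
    rw [hcof3, ← Cardinal.aleph_zero]
    exact Cardinal.aleph_lt_aleph.2 (by norm_num)
  have h13 : #((Cardinal.aleph 1).ord).ToType < ((Cardinal.aleph 3).ord).cof := by
    rw [hcof3, Cardinal.mk_toType, Cardinal.card_ord]
    exact Cardinal.aleph_lt_aleph.2 (by norm_num)
  have hAcof : ∀ γ ∈ A, ℵ₀ < γ.cof := fun γ hγ => by
    rw [(hA hγ).2]; exact Cardinal.aleph0_lt_aleph_one
  have hAlim : ∀ γ ∈ A, Order.IsSuccLimit γ := fun γ hγ =>
    Ordinal.aleph0_le_cof.1 (hAcof γ hγ).le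
  -- unboundedness (strict form) of each C γ
  have hCub : ∀ γ ∈ A, ∀ x < γ, ∃ c ∈ C γ, x < c ∧ c < γ := by
    intro γ hγ x hx
    obtain ⟨c, hc, hxc⟩ := (hclub γ hγ).2.1 (Order.succ x) ((hAlim γ hγ).succ_lt hx)
    exact ⟨c, hc, (Order.lt_succ x).trans_le hxc, (hclub γ hγ).1 hc⟩
  -- there is a stationary level
  have hexists : ∃ i₀ : Ordinal.{u1}, i₀ < (Cardinal.aleph 1).ord ∧
      IsStatIn (S0 A C (liftO.{u1} i₀)) (Cardinal.aleph 3).ord := by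
    by_contra hcon
    push_neg at hcon
    have hclubs : ∀ i : Ordinal.{u1}, ∃ E, IsClubIn E (Cardinal.aleph 3).ord ∧
        (i < (Cardinal.aleph 1).ord → S0 A C (liftO.{u1} i) ∩ E = ∅) := by
      intro i
      by_cases hi : i < (Cardinal.aleph 1).ord
      · have h1 := hcon i hi
        rw [IsStatIn] at h1
        push_neg at h1
        obtain ⟨E, hE, hne⟩ := h1
        exact ⟨E, hE, fun _ => hne⟩
      · refine ⟨Set.Iio (Cardinal.aleph 3).ord, ?_, fun h => absurd h hi⟩
        exact ⟨fun x hx => hx, fun b hb => ⟨b, hb, le_rfl⟩,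
          fun α hα _ _ => hα⟩
    choose E hE hEdis using hclubs
    haveI : IsWellOrder ((Cardinal.aleph 1).ord : Ordinal.{u1}).ToType (· < ·) :=
      isWellOrder_lt
    have hιne : Nonempty ((Cardinal.aleph 1).ord : Ordinal.{u1}).ToType := by
      rw [Ordinal.toType_nonempty_iff_ne_zero]
      intro h0
      rw [← Cardinal.ord_zero] at h0
      exact absurd (Cardinal.ord_injective h0) (Cardinal.aleph_pos 1).ne'
    have hDclub : IsClubIn
        (⋂ t : ((Cardinal.aleph 1).ord : Ordinal.{u1}).ToType, E (Ordinal.typein (· < ·) t))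
        (Cardinal.aleph 3).ord :=
      clubIn_iInter h03 h13 (fun t => hE _)
    set DD := ⋂ t : ((Cardinal.aleph 1).ord : Ordinal.{u1}).ToType,
      E (Ordinal.typein (· < ·) t) with hDD
    obtain ⟨hLclub, _⟩ := limPts_club h03 hDclub
    obtain ⟨γ, hγA, hγL⟩ := hAstat _ hLclub
    -- common limit point of C γ and DD below γ
    have hbcard : #(ULift.{u1} Bool) < γ.cof := by
      rw [Cardinal.mk_fintype, (hA hγA).2]
      exact lt_trans (by exact_mod_cast Cardinal.nat_lt_aleph0 2) Cardinal.aleph0_lt_aleph_one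
    have hD' : ∀ b : ULift Bool, ∀ x < γ, ∃ c ∈ (cond b.down (C γ) DD), x < c ∧ c < γ := by
      rintro ⟨b⟩
      cases b
      · exact hγL.2.2
      · exact hCub γ hγA
    obtain ⟨α, _, hαγ, h0α, hlp⟩ :=
      famLimit (hAcof γ hγA) hbcard (fun b : ULift Bool => cond b.down (C γ) DD) hD'
        (hAlim γ hγA).pos
    have hαC : α ∈ C γ := (hclub γ hγA).2.2 α hαγ h0α (hlp (ULift.up true))
    have hαD : α ∈ DD := hDclub.2.2 α (hαγ.trans (hA hγA).1) h0α (hlp (ULift.up false))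
    have hξ : otp (C γ ∩ Set.Iio α) < liftO ((Cardinal.aleph 1).ord : Ordinal) := by
      rw [liftO_omega1, ← hotp γ hγA]
      exact otp_lt_of_mem hαC
    obtain ⟨i, hi, hlift⟩ := lt_liftO_iff.1 hξ
    have hαS : α ∈ S0 A C (liftO i) := ⟨γ, hγA, hαC, hlp (ULift.up true), hlift.symm⟩
    -- α belongs to the club E i
    have ht : ∃ t : ((Cardinal.aleph 1).ord : Ordinal.{u1}).ToType,
        Ordinal.typein (· < ·) t = i := by
      refine ⟨Ordinal.enum (· < ·) ⟨i, ?_⟩, Ordinal.typein_enum _ _⟩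
      rw [Ordinal.type_toType]
      exact hi
    obtain ⟨t, ht⟩ := ht
    have hαE : α ∈ E i := by
      have := Set.mem_iInter.1 hαD t
      rwa [ht] at this
    exact Set.eq_empty_iff_forall_notMem.1 (hEdis i hi) α ⟨hαS, hαE⟩
  obtain ⟨j₀, hj₀, hstat₀⟩ := hexists
  have hlj₀ : liftO.{u1} j₀ < (Cardinal.aleph 1).ord := by
    rw [← liftO_omega1]
    exact Ordinal.lift_lt.2 hj₀
  obtain ⟨i₀, hi₀, htr₀⟩ := trf_surj.{u1 + 1, u2} hlj₀
  -- the sets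
  refine ⟨fun i => S0 A C (trf.{u1 + 1, u2} i) ∪ S0 A C (trf.{u1 + 1, u2} i₀), ?_, ?_⟩
  · intro i hi
    refine ⟨?_, ?_, ?_⟩
    · -- subset condition
      have hsub : ∀ ξ, ∀ α ∈ S0 A C ξ,
          α < (Cardinal.aleph 3).ord ∧ α.cof < Cardinal.aleph 1 := by
        intro ξ α hα
        obtain ⟨γ, hγ, hαC, hlp', hξ'⟩ := hα
        have hαγ : α < γ := (hclub γ hγ).1 hαC
        refine ⟨hαγ.trans (hA hγ).1, ?_⟩
        rcases eq_or_lt_of_le (zero_le : 0 ≤ α) with h0 | h0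
        · rw [← h0, Ordinal.cof_zero]
          exact Cardinal.aleph_pos 1
        · refine cof_lt_aleph1 (s := C γ ∩ Set.Iio α) (fun x hx => hx.2) ?_ h0 ?_
          · intro b hb
            obtain ⟨c, hc, h1, h2⟩ := hlp' b hb
            exact ⟨c, ⟨hc, h2⟩, h1⟩
          · rw [← hotp γ hγ]
            exact otp_lt_of_mem hαC
      intro α hα
      rcases hα with hα | hα
      · exact hsub _ α hα
      · exact hsub _ α hα
    · -- stationarity
      intro E hE
      obtain ⟨x, hx1, hx2⟩ := hstat₀ E hE
      rw [← htr₀] at hx1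
      exact ⟨x, Or.inr hx1, hx2⟩
    · -- no reflection at points of A
      apply Set.eq_empty_iff_forall_notMem.2
      rintro γ ⟨hγTr, hγA⟩
      obtain ⟨_, _, hstat⟩ := hγTr
      have hγlim := hAlim γ hγA
      -- the (at most two) trouble points
      set p1 : Ordinal := if h : (S0 A C (trf.{u1 + 1, u2} i) ∩ C γ).Nonempty then h.choose else 0
        with hp1
      set p2 : Ordinal := if h : (S0 A C (trf.{u1 + 1, u2} i₀) ∩ C γ).Nonempty then h.choose else 0
        with hp2
      have hp1γ : p1 < γ := by
        rw [hp1]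
        split
        · next h => exact (hclub γ hγA).1 h.choose_spec.2
        · exact hγlim.pos
      have hp2γ : p2 < γ := by
        rw [hp2]
        split
        · next h => exact (hclub γ hγA).1 h.choose_spec.2
        · exact hγlim.pos
      set p := max p1 p2 with hp
      have hpγ : p < γ := max_lt hp1γ hp2γ
      have hbound : ∀ x, x ∈ S0 A C (trf.{u1 + 1, u2} i) ∪ S0 A C (trf.{u1 + 1, u2} i₀) → x ∈ C γ → x ≤ p := by
        intro x hx hxC
        rcases hx with hx | hx
        · have hne : (S0 A C (trf.{u1 + 1, u2} i) ∩ C γ).Nonempty := ⟨x, hx, hxC⟩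
          have hxp : x = p1 := by
            rw [hp1, dif_pos hne]
            exact S0_unique hcoh hγA hx hne.choose_spec.1 hxC hne.choose_spec.2
          rw [hxp, hp]
          exact le_max_left _ _
        · have hne : (S0 A C (trf.{u1 + 1, u2} i₀) ∩ C γ).Nonempty := ⟨x, hx, hxC⟩
          have hxp : x = p2 := by
            rw [hp2, dif_pos hne]
            exact S0_unique hcoh hγA hx hne.choose_spec.1 hxC hne.choose_spec.2
          rw [hxp, hp]
          exact le_max_right _ _
      -- the tail club avoiding the trouble points
      have hTclub : IsClubIn {c | c ∈ C γ ∧ p < c} γ := by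
        refine ⟨fun x hx => (hclub γ hγA).1 hx.1, ?_, ?_⟩
        · intro b hb
          obtain ⟨c, hc, h1, h2⟩ := hCub γ hγA (max b p) (max_lt hb hpγ)
          exact ⟨c, ⟨hc, (le_max_right b p).trans_lt h1⟩, ((le_max_left b p).trans_lt h1).le⟩
        · intro α hαγ h0 hlp
          have hαC : α ∈ C γ := by
            refine (hclub γ hγA).2.2 α hαγ h0 ?_
            intro b hb
            obtain ⟨c, hc, h1, h2⟩ := hlp b hb
            exact ⟨c, hc.1, h1, h2⟩
          obtain ⟨c, hc, _, h2⟩ := hlp 0 h0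
          exact ⟨hαC, hc.2.trans h2⟩
      obtain ⟨x, ⟨hxS, hxγ⟩, hxT⟩ := hstat _ hTclub
      exact absurd (hbound x hxS hxT.1) (not_le.2 hxT.2)
  · -- A is contained in the trace of the union
    intro γ hγA
    refine ⟨(hA hγA).1, by rw [(hA hγA).2]; exact Cardinal.aleph0_lt_aleph_one, ?_⟩
    intro E hE
    have hγlim := hAlim γ hγA
    have hbcard : #(ULift.{u1} Bool) < γ.cof := by
      rw [Cardinal.mk_fintype, (hA hγA).2]
      exact lt_trans (by exact_mod_cast Cardinal.nat_lt_aleph0 2) Cardinal.aleph0_lt_aleph_one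
    have hD' : ∀ b : ULift Bool, ∀ x < γ, ∃ c ∈ (cond b.down (C γ) E), x < c ∧ c < γ := by
      rintro ⟨b⟩
      cases b
      · intro x hx
        obtain ⟨c, hc, hxc⟩ := hE.2.1 (Order.succ x) (hγlim.succ_lt hx)
        exact ⟨c, hc, (Order.lt_succ x).trans_le hxc, hE.1 hc⟩
      · exact hCub γ hγA
    obtain ⟨α, _, hαγ, h0α, hlp⟩ :=
      famLimit (hAcof γ hγA) hbcard (fun b : ULift Bool => cond b.down (C γ) E) hD' hγlim.pos
    have hαC : α ∈ C γ := (hclub γ hγA).2.2 α hαγ h0α (hlp (ULift.up true))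
    have hαE : α ∈ E := hE.2.2 α hαγ h0α (hlp (ULift.up false))
    have hξ : otp (C γ ∩ Set.Iio α) < (Cardinal.aleph 1).ord := by
      rw [← hotp γ hγA]
      exact otp_lt_of_mem hαC
    obtain ⟨j, hj, hliftj⟩ := trf_surj.{u1 + 1, u2} hξ
    have hαS : α ∈ S0 A C (trf.{u1 + 1, u2} j) :=
      ⟨γ, hγA, hαC, hlp (ULift.up true), hliftj.symm⟩
    refine ⟨α, ⟨?_, hαγ⟩, hαE⟩
    exact Set.mem_biUnion hj (Or.inl hαS)


/-- If `A ⊆ {γ < ω₃ : cf γ = ω₁}` is stationary with a square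
sequence, then there are stationary `S i ⊆ {α < ω₃ : cf α < ω₁}` (`i < ω₁`) with
`Tr(S i) ∩ A = ∅` for each `i` but `A ⊆ Tr(⋃_{i<ω₁} S i)`. -/
theorem stmt8
    (A : Set Ordinal)
    (hA : A ⊆ {γ | γ < (Cardinal.aleph 3).ord ∧ Ordinal.cof γ = Cardinal.aleph 1})
    (hAstat : IsStatIn A (Cardinal.aleph 3).ord)
    (C : Ordinal → Set Ordinal)
    (hclub : ∀ γ ∈ A, IsClubIn (C γ) γ)
    (hotp : ∀ γ ∈ A, otp (C γ) = (Cardinal.aleph 1).ord)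
    (hcoh : ∀ γ₁ ∈ A, ∀ γ₂ ∈ A, ∀ α, α ∈ C γ₁ ∩ C γ₂ →
      C γ₁ ∩ Set.Iio α = C γ₂ ∩ Set.Iio α) :
    ∃ S : Ordinal → Set Ordinal,
      (∀ i < (Cardinal.aleph 1).ord,
        S i ⊆ {α | α < (Cardinal.aleph 3).ord ∧ Ordinal.cof α < Cardinal.aleph 1} ∧
        IsStatIn (S i) (Cardinal.aleph 3).ord ∧
        Tr3 (S i) ∩ A = ∅) ∧
      A ⊆ Tr3 (⋃ i ∈ Set.Iio (Cardinal.aleph 1).ord, S i) := by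
  exact stmt8_aux A hA hAstat C hclub hotp hcoh
end

section
/- Let k < m ≤ n be natural numbers with m ≥ 1, and suppose A ⊆ {γ < ω_n : cf γ = ω_m} is stationary and carries a square sequence ⟨C_γ : γ ∈ A⟩: each C_γ is club in γ of order type ω_m, consists of ordinals of cofinality < ω_m, and α ∈ C_{γ₁} ∩ C_{γ₂} implies C_{γ₁} ∩ α = C_{γ₂} ∩ α. Then there exists a stationary set S ⊆ {α < ω_n : cf α = ω_k} that does not reflect at any γ ∈ A. -/
open Ordinal Cardinal Set

universe u

namespace Stmt9Aux

theorem otp_inter_Iio_lt {s : Set Ordinal.{u}} {a : Ordinal.{u}} (ha : a ∈ s) :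
    otp (s ∩ Set.Iio a) < otp s := by
  have f : PrincipalSeg ((· < ·) : (s ∩ Set.Iio a : Set _) → _ → Prop) ((· < ·) : s → s → Prop) := by
    refine ⟨⟨⟨fun x => ⟨x.1, x.2.1⟩, ?_⟩, ?_⟩, ⟨a, ha⟩, ?_⟩
    · rintro ⟨x, hx⟩ ⟨y, hy⟩ h
      simpa [Subtype.ext_iff] using congrArg Subtype.val h
    · intro x y
      exact ⟨fun h => by exact_mod_cast h, fun h => by exact_mod_cast h⟩
    · rintro ⟨b, hb⟩
      constructor
      · rintro ⟨⟨x, hx⟩, heq⟩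
        have hxb : x = b := congrArg Subtype.val heq
        subst hxb
        exact hx.2
      · intro hlt
        exact ⟨⟨b, hb, hlt⟩, rfl⟩
  exact f.ordinal_type_lt

theorem otp_strictMono {s : Set Ordinal.{u}} {a b : Ordinal.{u}} (ha : a ∈ s) (hb : b ∈ s)
    (hab : a < b) : otp (s ∩ Set.Iio a) < otp (s ∩ Set.Iio b) := by
  have h := otp_inter_Iio_lt (s := s ∩ Set.Iio b) (a := a) ⟨ha, hab⟩
  have : s ∩ Set.Iio b ∩ Set.Iio a = s ∩ Set.Iio a := by
    ext x
    constructor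
    · rintro ⟨⟨h1, _⟩, h2⟩; exact ⟨h1, h2⟩
    · rintro ⟨h1, h2⟩; exact ⟨⟨h1, h2.trans hab⟩, h2⟩
  rwa [this] at h

/-- Core construction: a common limit point of a small family of clubs. -/
theorem exists_limitPoint {θ o : Ordinal.{u}} (hθ : ℵ₀ < θ.cof)
    (ho : o.card < θ.cof) (h0 : 0 < o)
    (D : ∀ ξ < o, Set Ordinal.{u}) (hD : ∀ ξ h, IsClubIn (D ξ h) θ)
    {β₀ : Ordinal.{u}} (hβ₀ : β₀ < θ) :
    ∃ α, β₀ ≤ α ∧ α < θ ∧ 0 < α ∧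
      ∀ ξ h, ∀ β < α, ∃ d ∈ D ξ h, β < d ∧ d < α := by
  have hθlim : Order.IsSuccLimit θ := Ordinal.aleph0_le_cof.1 hθ.le
  have hnext : ∀ β < θ, ∀ ξ h, (D ξ h ∩ Set.Ioi β).Nonempty := by
    intro β hβ ξ h
    obtain ⟨d, hd, hd2⟩ := (hD ξ h).2.1 (Order.succ β) (hθlim.succ_lt hβ)
    exact ⟨d, hd, (Order.lt_succ β).trans_le hd2⟩
  set g : Ordinal.{u} → Ordinal.{u} := fun β =>
    if hβ : β < θ then o.bsup (fun ξ h => sInf (D ξ h ∩ Set.Ioi β)) else 0 with hg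
  have hgmem : ∀ β, β < θ → ∀ ξ h, sInf (D ξ h ∩ Set.Ioi β) ∈ D ξ h ∩ Set.Ioi β :=
    fun β hβ ξ h => csInf_mem (hnext β hβ ξ h)
  have hglt : ∀ β, β < θ → g β < θ := by
    intro β hβ
    rw [hg]; simp only [dif_pos hβ]
    exact Ordinal.bsup_lt_ord ho fun ξ h => (hD ξ h).1 (hgmem β hβ ξ h).1
  have hggt : ∀ β, β < θ → β < g β := by
    intro β hβ
    rw [hg]; simp only [dif_pos hβ]
    exact lt_of_lt_of_le (hgmem β hβ 0 h0).2 (Ordinal.le_bsup _ 0 h0)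
  have hgle : ∀ β, β < θ → ∀ ξ h, sInf (D ξ h ∩ Set.Ioi β) ≤ g β := by
    intro β hβ ξ h
    rw [hg]; simp only [dif_pos hβ]
    exact Ordinal.le_bsup _ ξ h
  set seq : ℕ → Ordinal.{u} := fun i => g^[i] β₀ with hseq
  have hseqsucc : ∀ i, seq (i + 1) = g (seq i) := by
    intro i; rw [hseq]; simp [Function.iterate_succ_apply']
  have hseqlt : ∀ i, seq i < θ := by
    intro i
    induction i with
    | zero => exact hβ₀
    | succ i ih => rw [hseqsucc]; exact hglt _ ih
  have hseqmono : ∀ i, seq i < seq (i + 1) := by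
    intro i; rw [hseqsucc]; exact hggt _ (hseqlt i)
  have hbd : BddAbove (Set.range seq) := Ordinal.bddAbove_range seq
  set α := ⨆ i, seq i with hα
  have hle : ∀ i, seq i ≤ α := fun i => le_ciSup hbd i
  have hltα : ∀ i, seq i < α := fun i => (hseqmono i).trans_le (hle (i + 1))
  have hαθ : α < θ := by
    apply Ordinal.iSup_lt_ord_lift _ hseqlt
    simpa using hθ
  have h0α : 0 < α := lt_of_le_of_lt (zero_le (a := _)) (hltα 0)
  refine ⟨α, hle 0, hαθ, h0α, ?_⟩
  intro ξ h β hβ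
  obtain ⟨i, hi⟩ := (lt_ciSup_iff' hbd).1 hβ
  refine ⟨sInf (D ξ h ∩ Set.Ioi (seq i)), (hgmem _ (hseqlt i) ξ h).1, ?_, ?_⟩
  · exact hi.trans (hgmem _ (hseqlt i) ξ h).2
  · calc sInf (D ξ h ∩ Set.Ioi (seq i)) ≤ g (seq i) := hgle _ (hseqlt i) ξ h
      _ = seq (i + 1) := (hseqsucc i).symm
      _ < α := hltα (i + 1)

theorem clubIn_biInter {θ o : Ordinal.{u}} (hθ : ℵ₀ < θ.cof)
    (ho : o.card < θ.cof) (h0 : 0 < o)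
    (D : ∀ ξ < o, Set Ordinal.{u}) (hD : ∀ ξ h, IsClubIn (D ξ h) θ) :
    IsClubIn (⋂ ξ, ⋂ h : ξ < o, D ξ h) θ := by
  refine ⟨?_, ?_, ?_⟩
  · intro x hx
    exact (hD 0 h0).1 (Set.mem_iInter₂.1 hx 0 h0)
  · intro β hβ
    obtain ⟨α, h1, h2, h3, h4⟩ := exists_limitPoint hθ ho h0 D hD hβ
    exact ⟨α, Set.mem_iInter₂.2 fun ξ h => (hD ξ h).2.2 α h2 h3 (h4 ξ h), h1⟩
  · intro α hα h0α H
    refine Set.mem_iInter₂.2 fun ξ h => (hD ξ h).2.2 α hα h0α ?_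
    intro β hβ
    obtain ⟨c, hc, h1, h2⟩ := H β hβ
    exact ⟨c, Set.mem_iInter₂.1 hc ξ h, h1, h2⟩

theorem clubIn_limitPoints {θ : Ordinal.{u}} {D : Set Ordinal.{u}} (hθ : ℵ₀ < θ.cof)
    (hD : IsClubIn D θ) :
    IsClubIn {γ | γ < θ ∧ 0 < γ ∧ ∀ β < γ, ∃ c ∈ D, β < c ∧ c < γ} θ := by
  refine ⟨fun x hx => hx.1, ?_, ?_⟩
  · intro β hβ
    obtain ⟨α, h1, h2, h3, h4⟩ := exists_limitPoint hθ
      (by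
        rw [show (1 : Ordinal.{u}) = ((1 : ℕ) : Ordinal.{u}) by norm_num, Ordinal.card_nat]
        exact lt_trans (by exact_mod_cast Cardinal.nat_lt_aleph0 1) hθ) zero_lt_one
      (fun _ _ => D) (fun _ _ => hD) hβ
    exact ⟨α, ⟨h2, h3, h4 0 zero_lt_one⟩, h1⟩
  · intro α hα h0α H
    refine ⟨hα, h0α, fun β hβ => ?_⟩
    obtain ⟨c, hc, h1, h2⟩ := H β hβ
    obtain ⟨d, hd, h3, h4⟩ := hc.2.2 β h1
    exact ⟨d, hd, h3, h4.trans h2⟩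

theorem clubIn_inter_Iio {θ γ : Ordinal.{u}} {D : Set Ordinal.{u}} (hD : IsClubIn D θ)
    (hγθ : γ < θ) (h0 : 0 < γ) (hlim : ∀ β < γ, ∃ c ∈ D, β < c ∧ c < γ) :
    IsClubIn (D ∩ Set.Iio γ) γ := by
  refine ⟨fun x hx => hx.2, ?_, ?_⟩
  · intro β hβ
    obtain ⟨c, hc, h1, h2⟩ := hlim β hβ
    exact ⟨c, ⟨hc, h2⟩, h1.le⟩
  · intro α hα h0α H
    refine ⟨hD.2.2 α (hα.trans hγθ) h0α ?_, hα⟩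
    intro β hβ
    obtain ⟨c, hc, h1, h2⟩ := H β hβ
    exact ⟨c, hc.1, h1, h2⟩

theorem clubIn_inter {θ : Ordinal.{u}} {D E : Set Ordinal.{u}} (hθ : ℵ₀ < θ.cof)
    (hD : IsClubIn D θ) (hE : IsClubIn E θ) : IsClubIn (D ∩ E) θ := by
  have h2 : ((2 : Ordinal.{u})).card < θ.cof := by
    have : ((2 : Ordinal.{u})).card = 2 := by
      rw [show ((2 : Ordinal.{u})) = ((2 : ℕ) : Ordinal.{u}) by norm_num, Ordinal.card_nat]
      norm_num
    rw [this]
    exact lt_trans (by exact_mod_cast Cardinal.nat_lt_aleph0 2) hθ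
  have key := clubIn_biInter hθ h2 (by norm_num)
    (fun ξ _ => if ξ = 0 then D else E)
    (fun ξ _ => by split <;> assumption)
  have heq : (⋂ ξ, ⋂ _ : ξ < (2 : Ordinal.{u}), if ξ = 0 then D else E) = D ∩ E := by
    ext x
    simp only [Set.mem_iInter₂, Set.mem_inter_iff]
    constructor
    · intro h
      refine ⟨?_, ?_⟩
      · have := h 0 (by norm_num)
        simpa using this
      · have := h 1 (by norm_num)
        simpa using this
    · rintro ⟨h1, h2⟩ ξ hξ
      rcases eq_or_ne ξ 0 with rfl | hne
      · simpa using h1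
      · simp only [if_neg hne]; exact h2
  rwa [heq] at key

theorem isRegular_aleph_nat (k : ℕ) : (ℵ_ (k : Ordinal.{u})).IsRegular := by
  cases k with
  | zero => simpa [aleph_zero] using Cardinal.isRegular_aleph0
  | succ k =>
    have : ((k + 1 : ℕ) : Ordinal.{u}) = Order.succ (k : Ordinal.{u}) := by
      push_cast
      rw [Ordinal.add_one_eq_succ]
    rw [this]
    exact Cardinal.isRegular_aleph_succ _

/-- In a club of an ordinal of large enough regular cofinality, there is a point
of any prescribed smaller regular cofinality. -/
theorem exists_cof_pt {γ : Ordinal.{u}} {E : Set Ordinal.{u}} (hE : IsClubIn E γ)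
    {κ : Cardinal.{u}} (hκ : κ.IsRegular) (hlt : κ < γ.cof) :
    ∃ α ∈ E, α.cof = κ := by
  have hγlim : Order.IsSuccLimit γ := Ordinal.aleph0_le_cof.1 (hκ.1.trans hlt.le)
  set E' : Set Ordinal.{u} := E ∪ Set.Ici γ with hE'def
  have hE' : ¬ BddAbove E' := by
    rintro ⟨b, hb⟩
    have hmem : Order.succ (max b γ) ∈ E' :=
      Set.mem_union_right _ ((le_max_right b γ).trans (Order.le_succ _))
    exact absurd (hb hmem) (not_le.2 ((le_max_left b γ).trans_lt (Order.lt_succ _)))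
  set e := enumOrd E' with hedef
  have hmemE : ∀ {x}, x ∈ E' → x < γ → x ∈ E := by
    intro x hx hxγ
    rcases hx with h | h
    · exact h
    · exact absurd hxγ (not_lt.2 h)
  -- Step A : the first κ.ord values of the enumeration stay below γ
  have stepA : ∀ ξ < κ.ord, e ξ < γ := by
    by_contra hcon
    push_neg at hcon
    obtain ⟨ξ₁, hξ₁, hγξ⟩ := hcon
    set bad := {ξ : Ordinal.{u} | γ ≤ e ξ} with hbaddef
    have hbadne : bad.Nonempty := ⟨ξ₁, hγξ⟩
    set ξ₀ := sInf bad with hξ₀def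
    have hξ₀mem : γ ≤ e ξ₀ := csInf_mem hbadne
    have hξ₀le : ξ₀ ≤ ξ₁ := csInf_le' hγξ
    have hlow : ∀ η, η < ξ₀ → e η < γ := by
      intro η hη
      by_contra hc
      exact absurd hη (not_lt.2 (csInf_le' (show η ∈ bad from not_lt.1 hc)))
    have hsup : Ordinal.bsup ξ₀ (fun η _ => e η) = γ := by
      apply le_antisymm (Ordinal.bsup_le fun η hη => (hlow η hη).le)
      by_contra hc
      push_neg at hc
      obtain ⟨c, hcE, hcge⟩ := hE.2.1 (Order.succ (Ordinal.bsup ξ₀ fun η _ => e η))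
        (hγlim.succ_lt hc)
      obtain ⟨η, hη⟩ := enumOrd_surjective hE' (Set.mem_union_left _ hcE)
      have hηlt : η < ξ₀ := by
        have := (enumOrd_lt_enumOrd hE' (a := η) (b := ξ₀)).1
        apply this
        rw [hη]
        exact lt_of_lt_of_le (hE.1 hcE) hξ₀mem
      have : c ≤ Ordinal.bsup ξ₀ fun η _ => e η := hη ▸ Ordinal.le_bsup _ η hηlt
      exact absurd ((Order.lt_succ _).trans_le hcge) (not_lt.2 this)
    have hcof : γ.cof ≤ ξ₀.card := by
      rw [← hsup]
      exact Ordinal.cof_bsup_le (by rw [hsup]; exact fun i h => hlow i h)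
    have : ξ₀.card < κ := Cardinal.lt_ord.1 (hξ₀le.trans_lt hξ₁)
    exact absurd hlt (not_lt.2 (hcof.trans this.le))
  have hordlim : Order.IsSuccLimit (κ.ord) := Cardinal.isSuccLimit_ord hκ.1
  set α := Ordinal.bsup κ.ord (fun ξ _ => e ξ) with hαdef
  have hαγ : α < γ := Ordinal.bsup_lt_ord (by rwa [Cardinal.card_ord]) stepA
  have heα : ∀ ξ (h : ξ < κ.ord), e ξ < α := by
    intro ξ h
    exact lt_of_lt_of_le (enumOrd_strictMono hE' (Order.lt_succ ξ))
      (Ordinal.le_bsup _ _ (hordlim.succ_lt h))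
  have hκ0 : (0 : Ordinal.{u}) < κ.ord := hordlim.pos
  have hαlimpt : ∀ β < α, ∃ c ∈ E, β < c ∧ c < α := by
    intro β hβ
    obtain ⟨ξ, hξ, hβξ⟩ := (Ordinal.lt_bsup _).1 hβ
    exact ⟨e ξ, hmemE (enumOrd_mem hE' ξ) (stepA ξ hξ), hβξ, heα ξ hξ⟩
  have h0α : 0 < α := lt_of_le_of_lt (zero_le (a := _)) (heα 0 hκ0)
  have hαE : α ∈ E := hE.2.2 α hαγ h0α hαlimpt
  refine ⟨α, hαE, le_antisymm ?_ ?_⟩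
  · calc α.cof ≤ (κ.ord).card := Ordinal.cof_bsup_le heα
      _ = κ := Cardinal.card_ord κ
  · -- κ ≤ cof α
    obtain ⟨ι, f, hflsub, hfcard⟩ := Ordinal.exists_lsub_cof α
    have hfα : ∀ i, f i < α := fun i => hflsub ▸ Ordinal.lt_lsub f i
    choose ζ hζ1 hζ2 using fun i => (Ordinal.lt_bsup _).1 (hfα i)
    have hlsubζ : Ordinal.lsub ζ = κ.ord := by
      apply le_antisymm (Ordinal.lsub_le hζ1)
      by_contra hc
      push_neg at hc
      have h1 : e (Ordinal.lsub ζ) < α := heα _ hc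
      obtain ⟨i, hi⟩ := Ordinal.lt_lsub_iff.1 (hflsub ▸ h1)
      have h2 : e (Ordinal.lsub ζ) < e (ζ i) := hi.trans_lt (hζ2 i)
      have h3 : Ordinal.lsub ζ < ζ i := (enumOrd_lt_enumOrd hE').1 h2
      exact absurd (Ordinal.lt_lsub ζ i) (not_lt.2 h3.le)
    calc κ = (κ.ord).cof := hκ.cof_eq.symm
      _ = (Ordinal.lsub ζ).cof := by rw [hlsubζ]
      _ ≤ #ι := Ordinal.cof_lsub_le ζ
      _ = α.cof := hfcard

theorem aleph_ord_lift (j : ℕ) :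
    (Cardinal.aleph ((j : ℕ) : Ordinal.{u + 1})).ord =
      Ordinal.lift.{u + 1, u} ((Cardinal.aleph ((j : ℕ) : Ordinal.{u})).ord) := by
  rw [Cardinal.lift_ord, Cardinal.lift_aleph, Ordinal.lift_natCast]

end Stmt9Aux

theorem Stmt9Aux.main (k m n : ℕ) (hkm : k < m) (hmn : m ≤ n) (hm : 1 ≤ m)
    (A : Set Ordinal.{u})
    (hA : A ⊆ {γ | γ < (Cardinal.aleph n).ord ∧ Ordinal.cof γ = Cardinal.aleph m})
    (hAstat : IsStatIn A (Cardinal.aleph n).ord)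
    (C : Ordinal.{u} → Set Ordinal.{u})
    (hclub : ∀ γ ∈ A, IsClubIn (C γ) γ)
    (hotp : ∀ γ ∈ A, otp (C γ) = (Cardinal.aleph m).ord)
    (hcof : ∀ γ ∈ A, ∀ α ∈ C γ, Ordinal.cof α < Cardinal.aleph m)
    (hcoh : ∀ γ₁ ∈ A, ∀ γ₂ ∈ A, ∀ α, α ∈ C γ₁ ∩ C γ₂ →
      C γ₁ ∩ Set.Iio α = C γ₂ ∩ Set.Iio α) :
    ∃ S : Set Ordinal.{u},
      S ⊆ {α | α < (Cardinal.aleph n).ord ∧ Ordinal.cof α = Cardinal.aleph k} ∧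
      IsStatIn S (Cardinal.aleph n).ord ∧
      ∀ γ ∈ A, ¬ IsStatIn (S ∩ Set.Iio γ) γ := by
  classical
  rcases lt_or_eq_of_le hmn with hmn' | rfl
  · -- main case: m < n
    have hregn : (Cardinal.aleph (n : Ordinal.{u})).IsRegular := Stmt9Aux.isRegular_aleph_nat n
    have hcofΩ : ((Cardinal.aleph n).ord).cof = Cardinal.aleph n := hregn.cof_eq
    have hℵ0n : ℵ₀ < Cardinal.aleph (n : Ordinal.{u}) := by
      rw [← Cardinal.aleph_zero]
      exact Cardinal.aleph_lt_aleph.2 (by exact_mod_cast (by omega : 0 < n))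
    have hℵ0m : ℵ₀ < Cardinal.aleph (m : Ordinal.{u}) := by
      rw [← Cardinal.aleph_zero]
      exact Cardinal.aleph_lt_aleph.2 (by exact_mod_cast hm)
    have hℵ0Ω : ℵ₀ < ((Cardinal.aleph n).ord).cof := by rw [hcofΩ]; exact hℵ0n
    have hmn'' : Cardinal.aleph (m : Ordinal.{u}) < Cardinal.aleph (n : Ordinal.{u}) :=
      Cardinal.aleph_lt_aleph.2 (by exact_mod_cast hmn')
    have hkm'' : Cardinal.aleph (k : Ordinal.{u}) < Cardinal.aleph (m : Ordinal.{u}) :=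
      Cardinal.aleph_lt_aleph.2 (by exact_mod_cast hkm)
    have hμpos : (0 : Ordinal.{u}) < (Cardinal.aleph m).ord :=
      (Cardinal.isSuccLimit_ord (Cardinal.aleph0_le_aleph _)).pos
    have hκreg : (Cardinal.aleph (k : Ordinal.{u})).IsRegular := Stmt9Aux.isRegular_aleph_nat k
    -- the base set
    set Sb : Set Ordinal.{u} := {α | (∃ δ ∈ A, α ∈ C δ) ∧ α.cof = Cardinal.aleph k} with hSb
    have statS : IsStatIn Sb (Cardinal.aleph n).ord := by
      intro D hD
      have hD' := Stmt9Aux.clubIn_limitPoints hℵ0Ω hD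
      obtain ⟨γ, hγA, hγD'⟩ := hAstat _ hD'
      obtain ⟨hγΩ, hγcof⟩ := hA hγA
      have hγ0 : 0 < γ := hγD'.2.1
      have hDγ : IsClubIn (D ∩ Set.Iio γ) γ :=
        Stmt9Aux.clubIn_inter_Iio hD hγΩ hγ0 hγD'.2.2
      have hℵ0γ : ℵ₀ < γ.cof := by rw [hγcof]; exact hℵ0m
      have hEclub : IsClubIn (C γ ∩ (D ∩ Set.Iio γ)) γ :=
        Stmt9Aux.clubIn_inter hℵ0γ (hclub γ hγA) hDγ
      obtain ⟨α, hαE, hαcof⟩ := Stmt9Aux.exists_cof_pt hEclub hκreg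
        (by rw [hγcof]; exact hkm'')
      exact ⟨α, ⟨⟨γ, hγA, hαE.1⟩, hαcof⟩, hαE.2.1⟩
    -- the order-type invariant
    set F : Ordinal.{u} → Ordinal.{u + 1} := fun α =>
      if h : ∃ δ, δ ∈ A ∧ α ∈ C δ then otp (C h.choose ∩ Set.Iio α) else 0 with hFdef
    have Fspec : ∀ δ ∈ A, ∀ α ∈ C δ, F α = otp (C δ ∩ Set.Iio α) := by
      intro δ hδ α hα
      have h : ∃ δ', δ' ∈ A ∧ α ∈ C δ' := ⟨δ, hδ, hα⟩
      simp only [hFdef]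
      rw [dif_pos h]
      exact congrArg otp (hcoh h.choose h.choose_spec.1 δ hδ α ⟨h.choose_spec.2, hα⟩)
    have Flt : ∀ δ ∈ A, ∀ α ∈ C δ,
        F α < Ordinal.lift.{u + 1, u} ((Cardinal.aleph (m : Ordinal.{u})).ord) := by
      intro δ hδ α hα
      rw [Fspec δ hδ α hα, ← Stmt9Aux.aleph_ord_lift m, ← hotp δ hδ]
      exact Stmt9Aux.otp_inter_Iio_lt hα
    set F' : Ordinal.{u} → Ordinal.{u} := fun α =>
      if h : ∃ ζ : Ordinal.{u}, Ordinal.lift.{u + 1, u} ζ = F α then h.choose else 0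
      with hF'def
    have F'spec : ∀ δ ∈ A, ∀ α ∈ C δ,
        Ordinal.lift.{u + 1, u} (F' α) = F α ∧ F' α < (Cardinal.aleph (m : Ordinal.{u})).ord := by
      intro δ hδ α hα
      obtain ⟨ζ, hζlt, hζeq⟩ := Ordinal.lt_lift_iff.1 (Flt δ hδ α hα)
      have h : ∃ ζ : Ordinal.{u}, Ordinal.lift.{u + 1, u} ζ = F α := ⟨ζ, hζeq⟩
      have hval : F' α = h.choose := by simp only [hF'def]; rw [dif_pos h]
      have hch := h.choose_spec
      refine ⟨by rw [hval, hch], ?_⟩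
      have : h.choose = ζ := Ordinal.lift_inj.1 (by rw [hch, hζeq])
      rw [hval, this]
      exact hζlt
    -- the pieces
    set Sp : Ordinal.{u} → Set Ordinal.{u} := fun ξ => {α | α ∈ Sb ∧ F' α = ξ} with hSpdef
    -- no piece reflects
    have nonrefl : ∀ ξ, ∀ γ ∈ A, ¬ IsStatIn (Sp ξ ∩ Set.Iio γ) γ := by
      intro ξ γ hγA hstat
      obtain ⟨hγΩ, hγcof⟩ := hA hγA
      have hγlim : Order.IsSuccLimit γ :=
        Ordinal.aleph0_le_cof.1 (by rw [hγcof]; exact Cardinal.aleph0_le_aleph _)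
      rcases (Sp ξ ∩ C γ).eq_empty_or_nonempty with hemp | ⟨a, haS, haC⟩
      · obtain ⟨x, hx1, hx2⟩ := hstat (C γ) (hclub γ hγA)
        have : x ∈ Sp ξ ∩ C γ := ⟨hx1.1, hx2⟩
        rw [hemp] at this
        exact Set.notMem_empty x this
      · have haγ : a < γ := (hclub γ hγA).1 haC
        have hC' : IsClubIn (C γ ∩ Set.Ioi a) γ := by
          refine ⟨fun x hx => (hclub γ hγA).1 hx.1, ?_, ?_⟩
          · intro β hβ
            obtain ⟨c, hc, hcge⟩ := (hclub γ hγA).2.1 (max β (Order.succ a))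
              (max_lt hβ (hγlim.succ_lt haγ))
            exact ⟨c, ⟨hc, lt_of_lt_of_le (Order.lt_succ a) ((le_max_right _ _).trans hcge)⟩,
              (le_max_left _ _).trans hcge⟩
          · intro α hα h0α H
            obtain ⟨c, hc, _, h2⟩ := H 0 h0α
            refine ⟨(hclub γ hγA).2.2 α hα h0α (fun β hβ => ?_), lt_trans hc.2 h2⟩
            obtain ⟨d, hd, h3, h4⟩ := H β hβ
            exact ⟨d, hd.1, h3, h4⟩
        obtain ⟨x, hx1, hx2⟩ := hstat _ hC'
        have hFx : F' x = ξ := hx1.1.2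
        have hFa : F' a = ξ := haS.2
        have hFeq : F a = F x := by
          rw [← (F'spec γ hγA a haC).1, ← (F'spec γ hγA x hx2.1).1, hFa, hFx]
        have hmono := Stmt9Aux.otp_strictMono haC hx2.1 hx2.2
        rw [← Fspec γ hγA a haC, ← Fspec γ hγA x hx2.1, hFeq] at hmono
        exact lt_irrefl _ hmono
    -- some piece is stationary
    have hex : ∃ ξ, IsStatIn (Sp ξ) (Cardinal.aleph n).ord := by
      by_contra hcon
      push_neg at hcon
      have hch : ∀ ξ : Ordinal.{u}, ∃ T : Set Ordinal.{u}, IsClubIn T (Cardinal.aleph n).ord ∧ Sp ξ ∩ T = ∅ := by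
        intro ξ
        have h1 := hcon ξ
        simp only [IsStatIn, not_forall] at h1
        obtain ⟨T, hT1, hT2⟩ := h1
        exact ⟨T, hT1, Set.not_nonempty_iff_eq_empty.1 hT2⟩
      choose T hT1 hT2 using hch
      have hclubT : IsClubIn (⋂ ξ, ⋂ _ : ξ < (Cardinal.aleph m).ord, T ξ)
          (Cardinal.aleph n).ord :=
        Stmt9Aux.clubIn_biInter hℵ0Ω
          (by rw [Cardinal.card_ord, hcofΩ]; exact hmn'') hμpos
          (fun ξ _ => T ξ) (fun ξ _ => hT1 ξ)
      obtain ⟨x, hx1, hx2⟩ := statS _ hclubT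
      obtain ⟨δ, hδA, hxC⟩ := hx1.1
      have hFx : F' x < (Cardinal.aleph m).ord := (F'spec δ hδA x hxC).2
      have hxx : x ∈ Sp (F' x) ∩ T (F' x) :=
        ⟨⟨hx1, rfl⟩, Set.mem_iInter₂.1 hx2 (F' x) hFx⟩
      rw [hT2 (F' x)] at hxx
      exact Set.notMem_empty x hxx
    obtain ⟨ξ₀, hξ₀⟩ := hex
    refine ⟨Sp ξ₀, ?_, hξ₀, fun γ hγ => nonrefl ξ₀ γ hγ⟩
    intro α hα
    obtain ⟨⟨δ, hδA, hαC⟩, hcofα⟩ := hα.1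
    exact ⟨lt_trans ((hclub δ hδA).1 hαC) (hA hδA).1, hcofα⟩
  · -- degenerate case m = n : the hypotheses are contradictory
    exfalso
    have hIio : IsClubIn (Set.Iio (Cardinal.aleph m).ord) (Cardinal.aleph m).ord :=
      ⟨fun x hx => hx, fun β hβ => ⟨β, hβ, le_refl β⟩, fun α hα _ _ => hα⟩
    obtain ⟨γ, hγA, _⟩ := hAstat _ hIio
    have h1 := (hA hγA).1
    have h2 := (hA hγA).2
    have h3 : γ.cof ≤ γ.card := Ordinal.cof_le_card γ
    have h4 : γ.card < Cardinal.aleph m := Cardinal.lt_ord.1 h1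
    rw [h2] at h3
    exact absurd (h3.trans_lt h4) (lt_irrefl _)

/-- Let `k < m ≤ n`, `m ≥ 1`. If `A ⊆ {γ < ω_n : cf γ = ω_m}` is
stationary and carries a square sequence (each `C γ` club in `γ` of order type
`ω_m`, consisting of ordinals of cofinality `< ω_m`, coherent), then some
stationary `S ⊆ {α < ω_n : cf α = ω_k}` does not reflect at any `γ ∈ A`. -/
theorem stmt9 (k m n : ℕ) (hkm : k < m) (hmn : m ≤ n) (hm : 1 ≤ m)
    (A : Set Ordinal)
    (hA : A ⊆ {γ | γ < (Cardinal.aleph n).ord ∧ Ordinal.cof γ = Cardinal.aleph m})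
    (hAstat : IsStatIn A (Cardinal.aleph n).ord)
    (C : Ordinal → Set Ordinal)
    (hclub : ∀ γ ∈ A, IsClubIn (C γ) γ)
    (hotp : ∀ γ ∈ A, otp (C γ) = (Cardinal.aleph m).ord)
    (hcof : ∀ γ ∈ A, ∀ α ∈ C γ, Ordinal.cof α < Cardinal.aleph m)
    (hcoh : ∀ γ₁ ∈ A, ∀ γ₂ ∈ A, ∀ α, α ∈ C γ₁ ∩ C γ₂ →
      C γ₁ ∩ Set.Iio α = C γ₂ ∩ Set.Iio α) :
    ∃ S : Set Ordinal,
      S ⊆ {α | α < (Cardinal.aleph n).ord ∧ Ordinal.cof α = Cardinal.aleph k} ∧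
      IsStatIn S (Cardinal.aleph n).ord ∧
      ∀ γ ∈ A, ¬ IsStatIn (S ∩ Set.Iio γ) γ := by
  exact Stmt9Aux.main k m n hkm hmn hm A hA hAstat C hclub hotp hcof hcoh
end
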